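/- arXiv:2508.17507 — 4 statements merged into one kernel-verified Lean document; each statement's English description precedes it below -/
import Mathlib

section
/- Let $(\Omega,\mathcal{F},P)$ be a probability space with a filtration $(\mathcal{F}_n)_{n\in\mathbb{Z}}$, let $K \geq 1$ be an integer, and let $Y_1,\dots,Y_N$ be an adapted sequence of random variables with $|Y_n| \le 1$ a.s. for all $n$. Then for any $\epsilon \in (0, 0.7)$, $P\left(\left|\sum_{n=1}^N (Y_n - \mathbb{E}(Y_n \mid \mathcal{F}_{n-K}))\right| \ge 4\sqrt{K(N+K)\ln(1/\epsilon)}\right) < \epsilon$. -/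
open MeasureTheory ProbabilityTheory Real

lemma exp_le_quad {x : ℝ} (hx : |x| ≤ 1) : Real.exp x ≤ 1 + x + 0.75 * x ^ 2 := by
  have h := Real.exp_bound hx (n := 2) (by norm_num)
  have h2 : ∑ m ∈ Finset.range 2, x ^ m / m.factorial = 1 + x := by
    simp [Finset.sum_range_succ]
  rw [h2] at h
  have h3 : |x| ^ 2 = x ^ 2 := sq_abs x
  have h4 := (abs_le.1 h).2
  have h5 : (↑(Nat.succ 2) / ((Nat.factorial 2 : ℝ) * (2:ℕ))) = 0.75 := by norm_num [Nat.factorial]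
  rw [h5, h3] at h4
  linarith

lemma my_integrable_of_bound {Ω : Type*} [MeasurableSpace Ω] (P : Measure Ω) [IsFiniteMeasure P]
    {f : Ω → ℝ} (hf : AEStronglyMeasurable f P) (C : ℝ) (h : ∀ᵐ ω ∂P, |f ω| ≤ C) :
    Integrable f P := by
  refine (integrable_const C).mono' hf ?_
  simpa [Real.norm_eq_abs] using h

lemma my_condexp_abs_le_one {Ω : Type*} [m0 : MeasurableSpace Ω] (P : Measure Ω)
    [IsProbabilityMeasure P] {m : MeasurableSpace Ω} (hm : m ≤ m0) {f : Ω → ℝ}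
    (hint : Integrable f P) (h : ∀ᵐ ω ∂P, |f ω| ≤ 1) :
    ∀ᵐ ω ∂P, |(P[f|m]) ω| ≤ 1 := by
  have h1 : P[f|m] ≤ᵐ[P] P[(fun _ => (1:ℝ))|m] :=
    condExp_mono hint (integrable_const 1) (by filter_upwards [h] with ω hω using (abs_le.1 hω).2)
  have h2 : P[(fun _ => (-1:ℝ))|m] ≤ᵐ[P] P[f|m] :=
    condExp_mono (integrable_const (-1)) hint
      (by filter_upwards [h] with ω hω using (abs_le.1 hω).1)
  have e1 : P[(fun _ => (1:ℝ))|m] = fun _ => (1:ℝ) := condExp_const hm 1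
  have e2 : P[(fun _ => (-1:ℝ))|m] = fun _ => (-1:ℝ) := condExp_const hm (-1)
  rw [e1] at h1; rw [e2] at h2
  filter_upwards [h1, h2] with ω h1 h2
  exact abs_le.2 ⟨h2, h1⟩

lemma step_bound {Ω : Type*} {m : MeasurableSpace Ω} [m0 : MeasurableSpace Ω]
    (P : Measure Ω) [IsProbabilityMeasure P] (hm : m ≤ m0) {Y1 : Ω → ℝ} (hY1 : StronglyMeasurable[m0] Y1)
    (hY1b : ∀ᵐ ω ∂P, |Y1 ω| ≤ 1) {W : Ω → ℝ} (hW : StronglyMeasurable[m] W)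
    (hW0 : ∀ ω, 0 ≤ W ω) {B : ℝ} (hWB : ∀ᵐ ω ∂P, W ω ≤ B) {t : ℝ} (ht : |t| ≤ 1) :
    ∫ ω, W ω * Real.exp (t * (Y1 ω - (P[Y1|m]) ω)) ∂P
      ≤ Real.exp (0.75 * t ^ 2) * ∫ ω, W ω ∂P := by
  have hY1ae : AEStronglyMeasurable Y1 P := hY1.aestronglyMeasurable
  have hY1int : Integrable Y1 P := my_integrable_of_bound P hY1ae 1 hY1b
  set μc : Ω → ℝ := P[Y1|m] with hμc
  have hμb : ∀ᵐ ω ∂P, |μc ω| ≤ 1 := my_condexp_abs_le_one P hm hY1int hY1b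
  have hμsm : StronglyMeasurable[m] μc := stronglyMeasurable_condExp
  set g : Ω → ℝ := fun ω => W ω * Real.exp (-t * μc ω) with hg
  have hg_sm : StronglyMeasurable[m] g :=
    hW.mul (Real.continuous_exp.comp_stronglyMeasurable (hμsm.const_mul (-t)))
  have hg0 : ∀ ω, 0 ≤ g ω := fun ω => mul_nonneg (hW0 ω) (Real.exp_pos _).le
  have hgB : ∀ᵐ ω ∂P, ‖g ω‖ ≤ |B| * Real.exp 1 := by
    filter_upwards [hWB, hμb] with ω h1 h2
    have h3 : Real.exp (-t * μc ω) ≤ Real.exp 1 := by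
      apply Real.exp_le_exp.2
      calc -t * μc ω ≤ |(-t) * μc ω| := le_abs_self _
        _ = |t| * |μc ω| := by rw [abs_mul, abs_neg]
        _ ≤ 1 := by
          calc |t| * |μc ω| ≤ 1 * 1 := by
                apply mul_le_mul ht h2 (abs_nonneg _) zero_le_one
            _ = 1 := one_mul 1
    rw [Real.norm_eq_abs, abs_mul, abs_of_nonneg (hW0 ω), abs_of_nonneg (Real.exp_pos _).le]
    exact mul_le_mul (h1.trans (le_abs_self B)) h3 (Real.exp_pos _).le (abs_nonneg _)
  set E : Ω → ℝ := fun ω => Real.exp (t * Y1 ω) with hE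
  have hE_sm : StronglyMeasurable[m0] E :=
    Real.continuous_exp.comp_stronglyMeasurable (hY1.const_mul t)
  have hEb : ∀ᵐ ω ∂P, |E ω| ≤ Real.exp 1 := by
    filter_upwards [hY1b] with ω h1
    rw [abs_of_nonneg (Real.exp_pos _).le]
    apply Real.exp_le_exp.2
    calc t * Y1 ω ≤ |t * Y1 ω| := le_abs_self _
      _ = |t| * |Y1 ω| := abs_mul _ _
      _ ≤ 1 := by nlinarith [abs_nonneg t, abs_nonneg (Y1 ω)]
  have hE_int : Integrable E P := my_integrable_of_bound P hE_sm.aestronglyMeasurable _ hEb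
  -- rewrite integrand
  have hrw : ∀ ω, W ω * Real.exp (t * (Y1 ω - μc ω)) = g ω * E ω := by
    intro ω
    simp only [hg, hE]
    rw [mul_assoc, ← Real.exp_add]
    ring_nf
  simp_rw [hrw]
  -- tower property
  have hgE_int : Integrable (g * E) P := by
    apply my_integrable_of_bound P ((hg_sm.mono hm).aestronglyMeasurable.mul
      hE_sm.aestronglyMeasurable) (|B| * Real.exp 1 * Real.exp 1)
    filter_upwards [hgB, hEb] with ω h1 h2
    calc |g ω * E ω| = |g ω| * |E ω| := abs_mul _ _
      _ ≤ |B| * Real.exp 1 * Real.exp 1 := by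
          apply mul_le_mul h1 h2 (abs_nonneg _)
          positivity
  have htower : ∫ ω, g ω * E ω ∂P = ∫ ω, g ω * (P[E|m]) ω ∂P := by
    have h1 : P[g * E|m] =ᵐ[P] g * P[E|m] :=
      condExp_stronglyMeasurable_mul_of_bound hm hg_sm hE_int (|B| * Real.exp 1) hgB
    calc ∫ ω, g ω * E ω ∂P = ∫ ω, (g * E) ω ∂P := rfl
      _ = ∫ ω, (P[g * E|m]) ω ∂P := (integral_condExp hm).symm
      _ = ∫ ω, (g * P[E|m]) ω ∂P := integral_congr_ae h1
      _ = ∫ ω, g ω * (P[E|m]) ω ∂P := rfl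
  rw [htower]
  -- bound the conditional expectation of E
  have hquad : ∀ᵐ ω ∂P, E ω ≤ 1 + t * Y1 ω + 0.75 * t ^ 2 := by
    filter_upwards [hY1b] with ω h1
    have hx : |t * Y1 ω| ≤ 1 := by
      rw [abs_mul]
      nlinarith [abs_nonneg t, abs_nonneg (Y1 ω)]
    calc E ω ≤ 1 + t * Y1 ω + 0.75 * (t * Y1 ω) ^ 2 := exp_le_quad hx
      _ ≤ 1 + t * Y1 ω + 0.75 * t ^ 2 := by
          have hY2 : Y1 ω ^ 2 ≤ 1 := by
            nlinarith [(abs_le.1 h1).1, (abs_le.1 h1).2, sq_abs (Y1 ω), abs_nonneg (Y1 ω)]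
          have : (t * Y1 ω) ^ 2 ≤ t ^ 2 := by
            rw [mul_pow]
            nlinarith [mul_le_mul_of_nonneg_left hY2 (sq_nonneg t)]
          linarith
  have haff_int : Integrable (fun ω => 1 + t * Y1 ω + 0.75 * t ^ 2) P := by
    apply Integrable.add (Integrable.add (integrable_const 1) (hY1int.const_mul t))
      (integrable_const _)
  have hcond_le : (P[E|m]) ≤ᵐ[P] fun ω => 1 + t * μc ω + 0.75 * t ^ 2 := by
    have h1 : (P[E|m]) ≤ᵐ[P] P[fun ω => 1 + t * Y1 ω + 0.75 * t ^ 2|m] :=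
      condExp_mono hE_int haff_int hquad
    have h2 : P[fun ω => 1 + t * Y1 ω + 0.75 * t ^ 2|m]
        =ᵐ[P] fun ω => 1 + t * μc ω + 0.75 * t ^ 2 := by
      have e1 : (fun ω => 1 + t * Y1 ω + 0.75 * t ^ 2)
          = (fun ω => (t : ℝ) • Y1 ω + (1 + 0.75 * t ^ 2)) := by funext ω; simp only [smul_eq_mul]; ring
      rw [e1]
      calc P[fun ω => (t : ℝ) • Y1 ω + (1 + 0.75 * t ^ 2)|m]
          =ᵐ[P] P[fun ω => (t : ℝ) • Y1 ω|m] + P[fun _ => (1 + 0.75 * t ^ 2)|m] :=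
            condExp_add (hY1int.smul t) (integrable_const _) m
        _ =ᵐ[P] fun ω => 1 + t * μc ω + 0.75 * t ^ 2 := by
            have e2 : P[fun _ : Ω => (1 + 0.75 * t ^ 2)|m] = fun _ => (1 + 0.75 * t ^ 2) :=
              condExp_const hm _
            have e3 : P[fun ω => (t : ℝ) • Y1 ω|m] =ᵐ[P] fun ω => (t : ℝ) • μc ω := by
              have := condExp_smul (μ := P) (m := m) (c := t) (f := Y1)
              exact this.trans (Filter.EventuallyEq.rfl)
            filter_upwards [e3] with ω h3
            simp only [Pi.add_apply, h3, e2]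
            simp [smul_eq_mul]; ring
    exact h1.trans h2.le
  have hcondE_int : Integrable (P[E|m]) P := integrable_condExp
  have hμ_ae : AEStronglyMeasurable μc P := (hμsm.mono hm).aestronglyMeasurable
  have hg_ae : AEStronglyMeasurable g P := (hg_sm.mono hm).aestronglyMeasurable
  have haffmul_int : Integrable (fun ω => g ω * (1 + t * μc ω + 0.75 * t ^ 2)) P := by
    apply my_integrable_of_bound P
      (hg_ae.mul ((aestronglyMeasurable_const.add (hμ_ae.const_mul t)).add
        aestronglyMeasurable_const)) (|B| * Real.exp 1 * 3)
    filter_upwards [hgB, hμb] with ω h1 h2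
    have h6 : |1 + t * μc ω + 0.75 * t ^ 2| ≤ 3 := by
      have h4 : |t * μc ω| ≤ 1 := by
        rw [abs_mul]; nlinarith [abs_nonneg t, abs_nonneg (μc ω)]
      have h5 : t ^ 2 ≤ 1 := by nlinarith [sq_abs t, abs_nonneg t]
      have := abs_le.1 h4
      rw [abs_le]; constructor <;> nlinarith
    calc |g ω * (1 + t * μc ω + 0.75 * t ^ 2)| = |g ω| * |1 + t * μc ω + 0.75 * t ^ 2| :=
          abs_mul _ _
      _ ≤ |B| * Real.exp 1 * 3 := by
          apply mul_le_mul h1 h6 (abs_nonneg _) (by positivity)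
  have hW_int : Integrable W P :=
    my_integrable_of_bound P (hW.mono hm).aestronglyMeasurable (|B|)
      (by filter_upwards [hWB] with ω h1 using
        (abs_le.2 ⟨by linarith [hW0 ω, abs_nonneg B], h1.trans (le_abs_self B)⟩))
  have step1 : ∫ ω, g ω * (P[E|m]) ω ∂P ≤ ∫ ω, g ω * (1 + t * μc ω + 0.75 * t ^ 2) ∂P := by
    apply integral_mono_ae
    · exact hcondE_int.bdd_mul hg_ae hgB
    · exact haffmul_int
    · filter_upwards [hcond_le] with ω h1
      exact mul_le_mul_of_nonneg_left h1 (hg0 ω)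
  have step2 : ∫ ω, g ω * (1 + t * μc ω + 0.75 * t ^ 2) ∂P
      ≤ ∫ ω, Real.exp (0.75 * t ^ 2) * W ω ∂P := by
    apply integral_mono_ae haffmul_int (hW_int.const_mul _)
    filter_upwards with ω
    have h1 : 1 + t * μc ω + 0.75 * t ^ 2 ≤ Real.exp (t * μc ω + 0.75 * t ^ 2) := by
      have := Real.add_one_le_exp (t * μc ω + 0.75 * t ^ 2)
      linarith
    calc g ω * (1 + t * μc ω + 0.75 * t ^ 2)
        ≤ g ω * Real.exp (t * μc ω + 0.75 * t ^ 2) := mul_le_mul_of_nonneg_left h1 (hg0 ω)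
      _ = Real.exp (0.75 * t ^ 2) * W ω := by
          simp only [hg]
          rw [mul_assoc, ← Real.exp_add]
          ring_nf
  calc ∫ ω, g ω * (P[E|m]) ω ∂P
      ≤ ∫ ω, g ω * (1 + t * μc ω + 0.75 * t ^ 2) ∂P := step1
    _ ≤ ∫ ω, Real.exp (0.75 * t ^ 2) * W ω ∂P := step2
    _ = Real.exp (0.75 * t ^ 2) * ∫ ω, W ω ∂P := integral_const_mul _ _

lemma class_bound {Ω : Type*} [m0 : MeasurableSpace Ω] (P : Measure Ω) [IsProbabilityMeasure P]
    (ℱ : Filtration ℤ m0) (K : ℕ)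
    (Y : ℤ → Ω → ℝ) (hadapt : ∀ n : ℤ, StronglyMeasurable[ℱ n] (Y n))
    (hbdd : ∀ n : ℤ, ∀ᵐ ω ∂P, |Y n ω| ≤ 1)
    {t : ℝ} (ht : |t| ≤ 1) (s : Finset ℤ)
    (hsep : ∀ a ∈ s, ∀ b ∈ s, a ≠ b → (K:ℤ) ≤ |a - b|) :
    ∫ ω, Real.exp (t * ∑ n ∈ s, (Y n ω - (P[Y n|ℱ (n - K)]) ω)) ∂P
      ≤ Real.exp (0.75 * t ^ 2 * s.card) := by
  have hYint : ∀ n : ℤ, Integrable (Y n) P := fun n =>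
    my_integrable_of_bound P ((hadapt n).mono (ℱ.le n)).aestronglyMeasurable 1 (hbdd n)
  have hXb : ∀ᵐ ω ∂P, ∀ n : ℤ, |Y n ω - (P[Y n|ℱ (n - K)]) ω| ≤ 2 := by
    rw [ae_all_iff]
    intro n
    filter_upwards [hbdd n, my_condexp_abs_le_one P (ℱ.le (n - K)) (hYint n) (hbdd n)]
      with ω h1 h2
    have e1 := abs_le.1 h1
    have e2 := abs_le.1 h2
    rw [abs_le]; constructor <;> [linarith; linarith]
  revert hsep
  induction s using Finset.induction_on_max with
  | empty =>
    intro _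
    simp
  | insert a s hmax ih =>
    intro hsep
    have hanotin : a ∉ s := fun h => lt_irrefl a (hmax a h)
    have hsep' : ∀ x ∈ s, ∀ y ∈ s, x ≠ y → (K:ℤ) ≤ |x - y| := fun x hx y hy hxy =>
      hsep x (Finset.mem_insert_of_mem hx) y (Finset.mem_insert_of_mem hy) hxy
    have hble : ∀ b ∈ s, b ≤ a - K := by
      intro b hb
      have h1 := hmax b hb
      have h2 := hsep a (Finset.mem_insert_self a s) b (Finset.mem_insert_of_mem hb)
        (ne_of_gt h1)
      rw [abs_of_pos (by linarith : (0:ℤ) < a - b)] at h2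
      linarith
    set W : Ω → ℝ := fun ω => Real.exp (t * ∑ n ∈ s, (Y n ω - (P[Y n|ℱ (n - K)]) ω)) with hWdef
    have hW_sm : StronglyMeasurable[ℱ (a - K)] W := by
      apply Real.continuous_exp.comp_stronglyMeasurable
      apply StronglyMeasurable.const_mul
      apply Finset.stronglyMeasurable_fun_sum
      intro n hn
      have hn' : n ≤ a - K := hble n hn
      exact ((hadapt n).mono (ℱ.mono hn')).sub
        (stronglyMeasurable_condExp.mono (ℱ.mono (by linarith : n - K ≤ a - K)))
    have hWB : ∀ᵐ ω ∂P, W ω ≤ Real.exp (2 * s.card) := by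
      filter_upwards [hXb] with ω hω
      apply Real.exp_le_exp.2
      have hsum : |∑ n ∈ s, (Y n ω - (P[Y n|ℱ (n - K)]) ω)| ≤ 2 * s.card := by
        calc |∑ n ∈ s, (Y n ω - (P[Y n|ℱ (n - K)]) ω)|
            ≤ ∑ n ∈ s, |Y n ω - (P[Y n|ℱ (n - K)]) ω| := Finset.abs_sum_le_sum_abs _ _
          _ ≤ ∑ _n ∈ s, (2:ℝ) := Finset.sum_le_sum fun n _ => hω n
          _ = 2 * s.card := by rw [Finset.sum_const]; simp [mul_comm]
      calc t * ∑ n ∈ s, (Y n ω - (P[Y n|ℱ (n - K)]) ω)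
          ≤ |t * ∑ n ∈ s, (Y n ω - (P[Y n|ℱ (n - K)]) ω)| := le_abs_self _
        _ = |t| * |∑ n ∈ s, (Y n ω - (P[Y n|ℱ (n - K)]) ω)| := abs_mul _ _
        _ ≤ 1 * (2 * s.card) := mul_le_mul ht hsum (abs_nonneg _) zero_le_one
        _ = 2 * s.card := one_mul _
    have hrw : ∀ ω, Real.exp (t * ∑ n ∈ insert a s, (Y n ω - (P[Y n|ℱ (n - K)]) ω))
        = W ω * Real.exp (t * (Y a ω - (P[Y a|ℱ (a - K)]) ω)) := by
      intro ω
      rw [Finset.sum_insert hanotin, mul_add, Real.exp_add, mul_comm]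
    simp_rw [hrw]
    calc ∫ ω, W ω * Real.exp (t * (Y a ω - (P[Y a|ℱ (a - K)]) ω)) ∂P
        ≤ Real.exp (0.75 * t ^ 2) * ∫ ω, W ω ∂P :=
          step_bound P (ℱ.le (a - K)) ((hadapt a).mono (ℱ.le a)) (hbdd a) hW_sm
            (fun ω => (Real.exp_pos _).le) hWB ht
      _ ≤ Real.exp (0.75 * t ^ 2) * Real.exp (0.75 * t ^ 2 * s.card) :=
          mul_le_mul_of_nonneg_left (ih hsep') (Real.exp_pos _).le
      _ = Real.exp (0.75 * t ^ 2 * (insert a s).card) := by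
          rw [← Real.exp_add, Finset.card_insert_of_notMem hanotin]
          push_cast
          ring_nf

lemma mgf_bound {Ω : Type*} [m0 : MeasurableSpace Ω] (P : Measure Ω) [IsProbabilityMeasure P]
    (ℱ : Filtration ℤ m0) (K : ℕ) (hK : 1 ≤ K) (N : ℕ)
    (Y : ℤ → Ω → ℝ) (hadapt : ∀ n : ℤ, StronglyMeasurable[ℱ n] (Y n))
    (hbdd : ∀ n : ℤ, ∀ᵐ ω ∂P, |Y n ω| ≤ 1)
    (lam : ℝ) (hlam : |lam * K| ≤ 1) :
    ∫ ω, Real.exp (lam * ∑ n ∈ Finset.Icc (1:ℤ) N, (Y n ω - (P[Y n|ℱ (n - K)]) ω)) ∂P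
      ≤ Real.exp (0.75 * (lam * K) ^ 2 * N / K) := by
  classical
  have hK0 : (0:ℤ) < (K:ℤ) := by exact_mod_cast hK
  set t : ℝ := lam * K with htdef
  set X : ℤ → Ω → ℝ := fun n ω => Y n ω - (P[Y n|ℱ (n - K)]) ω with hXdef
  set cls : ℕ → Finset ℤ := fun r => (Finset.Icc (1:ℤ) N).filter (fun n => (n % K).toNat = r)
    with hclsdef
  have hmaps : ∀ n ∈ Finset.Icc (1:ℤ) N, (n % (K:ℤ)).toNat ∈ Finset.range K := by
    intro n _
    have h1 : 0 ≤ n % (K:ℤ) := Int.emod_nonneg n (by omega)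
    have h2 : n % (K:ℤ) < K := Int.emod_lt_of_pos n hK0
    rw [Finset.mem_range]
    omega
  have hsum_part : ∀ (g : ℤ → ℝ),
      ∑ r ∈ Finset.range K, ∑ n ∈ cls r, g n = ∑ n ∈ Finset.Icc (1:ℤ) N, g n := by
    intro g
    exact Finset.sum_fiberwise_of_maps_to hmaps g
  have hcard : ∑ r ∈ Finset.range K, ((cls r).card : ℝ) = (N : ℝ) := by
    have h1 : ∑ r ∈ Finset.range K, ∑ _n ∈ cls r, (1:ℝ) = ∑ _n ∈ Finset.Icc (1:ℤ) N, (1:ℝ) :=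
      hsum_part (fun _ => 1)
    simp only [Finset.sum_const, nsmul_eq_mul, mul_one] at h1
    rw [h1, Int.card_Icc]
    simp
  have hsep : ∀ r, ∀ a ∈ cls r, ∀ b ∈ cls r, a ≠ b → (K:ℤ) ≤ |a - b| := by
    intro r a ha b hb hab
    rw [hclsdef, Finset.mem_filter] at ha hb
    have h1 : a % K = b % K := by
      have e1 : 0 ≤ a % (K:ℤ) := Int.emod_nonneg a (by omega)
      have e2 : 0 ≤ b % (K:ℤ) := Int.emod_nonneg b (by omega)
      omega
    have h2 : (K:ℤ) ∣ (a - b) := by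
      have : (a - b) % K = 0 := by
        rw [Int.sub_emod, h1]
        simp
      exact Int.dvd_of_emod_eq_zero this
    exact Int.le_of_dvd (abs_pos.2 (sub_ne_zero.2 hab)) ((dvd_abs _ _).2 h2)
  -- measurability and integrability of class mgfs
  have hXsm : ∀ n : ℤ, StronglyMeasurable[m0] (X n) := fun n =>
    ((hadapt n).mono (ℱ.le n)).sub (stronglyMeasurable_condExp.mono (ℱ.le (n - K)))
  have hYint : ∀ n : ℤ, Integrable (Y n) P := fun n =>
    my_integrable_of_bound P ((hadapt n).mono (ℱ.le n)).aestronglyMeasurable 1 (hbdd n)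
  have hXb : ∀ᵐ ω ∂P, ∀ n : ℤ, |X n ω| ≤ 2 := by
    rw [ae_all_iff]
    intro n
    filter_upwards [hbdd n, my_condexp_abs_le_one P (ℱ.le (n - K)) (hYint n) (hbdd n)]
      with ω h1 h2
    have e1 := abs_le.1 h1
    have e2 := abs_le.1 h2
    simp only [hXdef]; rw [abs_le]; constructor <;> [linarith; linarith]
  set f : ℕ → Ω → ℝ := fun r ω => Real.exp (t * ∑ n ∈ cls r, X n ω) with hfdef
  have hf_sm : ∀ r, StronglyMeasurable[m0] (f r) := by
    intro r
    exact Real.continuous_exp.comp_stronglyMeasurable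
      ((Finset.stronglyMeasurable_fun_sum (cls r) (fun n _ => hXsm n)).const_mul t)
  have hf_pos : ∀ r ω, 0 < f r ω := fun r ω => Real.exp_pos _
  have hf_bdd : ∀ r, ∀ᵐ ω ∂P, |f r ω| ≤ Real.exp (2 * (cls r).card) := by
    intro r
    filter_upwards [hXb] with ω hω
    rw [abs_of_pos (hf_pos r ω)]
    apply Real.exp_le_exp.2
    have hsum : |∑ n ∈ cls r, X n ω| ≤ 2 * (cls r).card := by
      calc |∑ n ∈ cls r, X n ω| ≤ ∑ n ∈ cls r, |X n ω| := Finset.abs_sum_le_sum_abs _ _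
        _ ≤ ∑ _n ∈ cls r, (2:ℝ) := Finset.sum_le_sum fun n _ => hω n
        _ = 2 * (cls r).card := by rw [Finset.sum_const]; simp [mul_comm]
    calc t * ∑ n ∈ cls r, X n ω ≤ |t * ∑ n ∈ cls r, X n ω| := le_abs_self _
      _ = |t| * |∑ n ∈ cls r, X n ω| := abs_mul _ _
      _ ≤ 1 * (2 * (cls r).card) := mul_le_mul hlam hsum (abs_nonneg _) zero_le_one
      _ = 2 * (cls r).card := one_mul _
  have hf_int : ∀ r, Integrable (f r) P := fun r =>
    my_integrable_of_bound P (hf_sm r).aestronglyMeasurable _ (hf_bdd r)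
  have hf_class : ∀ r, ∫ ω, f r ω ∂P ≤ Real.exp (0.75 * t ^ 2 * (cls r).card) := fun r =>
    class_bound P ℱ K Y hadapt hbdd hlam (cls r) (hsep r)
  -- pointwise product decomposition
  have hKR : (0:ℝ) < (K:ℝ) := by exact_mod_cast hK0
  have hpoint : ∀ ω, Real.exp (lam * ∑ n ∈ Finset.Icc (1:ℤ) N, X n ω)
      = ∏ r ∈ Finset.range K, (f r ω) ^ ((K:ℝ)⁻¹) := by
    intro ω
    have h1 : ∀ r, (f r ω) ^ ((K:ℝ)⁻¹) = Real.exp (t * (∑ n ∈ cls r, X n ω) * (K:ℝ)⁻¹) := by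
      intro r
      rw [hfdef]
      rw [Real.exp_mul]
    simp_rw [h1]
    rw [← Real.exp_sum]
    congr 1
    have h2 : ∀ r, t * (∑ n ∈ cls r, X n ω) * (K:ℝ)⁻¹ = ∑ n ∈ cls r, lam * X n ω := by
      intro r
      have e : t * (∑ n ∈ cls r, X n ω) * (K:ℝ)⁻¹ = lam * ∑ n ∈ cls r, X n ω := by
        rw [htdef]
        field_simp
      rw [e, Finset.mul_sum]
    simp_rw [h2]
    rw [hsum_part (fun n => lam * X n ω), ← Finset.mul_sum]
  have hcardIcc : (((Finset.Icc (1:ℤ) N).card) : ℝ) = N := by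
    rw [Int.card_Icc]
    simp
  have hlam1 : |lam| ≤ 1 := by
    have h1 : (1:ℝ) ≤ K := by exact_mod_cast hK
    have h2 : |lam| * 1 ≤ |lam| * K := mul_le_mul_of_nonneg_left h1 (abs_nonneg lam)
    calc |lam| = |lam| * 1 := (mul_one _).symm
      _ ≤ |lam| * K := h2
      _ = |lam * K| := by rw [abs_mul, abs_of_pos hKR]
      _ ≤ 1 := hlam
  have hIexp : Integrable (fun ω => Real.exp (lam * ∑ n ∈ Finset.Icc (1:ℤ) N, X n ω)) P := by
    apply my_integrable_of_bound P
      ((Real.continuous_exp.comp_stronglyMeasurable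
        ((Finset.stronglyMeasurable_fun_sum _ (fun n _ => hXsm n)).const_mul lam)).aestronglyMeasurable)
      (Real.exp (2 * N))
    filter_upwards [hXb] with ω hω
    rw [abs_of_pos (Real.exp_pos _)]
    apply Real.exp_le_exp.2
    have hsum : |∑ n ∈ Finset.Icc (1:ℤ) N, X n ω| ≤ 2 * N := by
      calc |∑ n ∈ Finset.Icc (1:ℤ) N, X n ω| ≤ ∑ n ∈ Finset.Icc (1:ℤ) N, |X n ω| :=
            Finset.abs_sum_le_sum_abs _ _
        _ ≤ ∑ _n ∈ Finset.Icc (1:ℤ) N, (2:ℝ) := Finset.sum_le_sum fun n _ => hω n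
        _ = 2 * N := by rw [Finset.sum_const]; simp [hcardIcc, mul_comm]
    calc lam * ∑ n ∈ Finset.Icc (1:ℤ) N, X n ω
        ≤ |lam * ∑ n ∈ Finset.Icc (1:ℤ) N, X n ω| := le_abs_self _
      _ = |lam| * |∑ n ∈ Finset.Icc (1:ℤ) N, X n ω| := abs_mul _ _
      _ ≤ 1 * (2 * N) := mul_le_mul hlam1 hsum (abs_nonneg _) zero_le_one
      _ = 2 * N := one_mul _
  -- Hölder
  have hhold := ENNReal.lintegral_prod_norm_pow_le (μ := P) (Finset.range K)
    (f := fun r ω => ENNReal.ofReal (f r ω))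
    (fun r _ => ((hf_sm r).measurable.ennreal_ofReal).aemeasurable)
    (p := fun _ => (K:ℝ)⁻¹)
    (by simp [Finset.sum_const]; field_simp)
    (fun r _ => by positivity)
  have hLHS : ∫⁻ ω, ∏ r ∈ Finset.range K, (ENNReal.ofReal (f r ω)) ^ ((K:ℝ)⁻¹) ∂P
      = ENNReal.ofReal (∫ ω, Real.exp (lam * ∑ n ∈ Finset.Icc (1:ℤ) N, X n ω) ∂P) := by
    have e1 : ∀ ω, ∏ r ∈ Finset.range K, (ENNReal.ofReal (f r ω)) ^ ((K:ℝ)⁻¹)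
        = ENNReal.ofReal (Real.exp (lam * ∑ n ∈ Finset.Icc (1:ℤ) N, X n ω)) := by
      intro ω
      rw [hpoint ω]
      rw [ENNReal.ofReal_prod_of_nonneg (fun r _ => (Real.rpow_pos_of_pos (hf_pos r ω) _).le)]
      exact Finset.prod_congr rfl fun r _ => ENNReal.ofReal_rpow_of_pos (hf_pos r ω)
    simp_rw [e1]
    rw [← ofReal_integral_eq_lintegral_ofReal]
    · exact hIexp
    · filter_upwards with ω using (Real.exp_pos _).le
  have hRHS : ∏ r ∈ Finset.range K, (∫⁻ ω, ENNReal.ofReal (f r ω) ∂P) ^ ((K:ℝ)⁻¹)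
      ≤ ENNReal.ofReal (Real.exp (0.75 * t ^ 2 * N / K)) := by
    have h1 : ∀ r ∈ Finset.range K, (∫⁻ ω, ENNReal.ofReal (f r ω) ∂P) ^ ((K:ℝ)⁻¹)
        ≤ ENNReal.ofReal (Real.exp (0.75 * t ^ 2 * (cls r).card * (K:ℝ)⁻¹)) := by
      intro r _
      have e1 : ∫⁻ ω, ENNReal.ofReal (f r ω) ∂P = ENNReal.ofReal (∫ ω, f r ω ∂P) :=
        (ofReal_integral_eq_lintegral_ofReal (hf_int r)
          (Filter.Eventually.of_forall fun ω => (hf_pos r ω).le)).symm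
      rw [e1]
      calc (ENNReal.ofReal (∫ ω, f r ω ∂P)) ^ ((K:ℝ)⁻¹)
          ≤ (ENNReal.ofReal (Real.exp (0.75 * t ^ 2 * (cls r).card))) ^ ((K:ℝ)⁻¹) :=
            ENNReal.rpow_le_rpow (ENNReal.ofReal_le_ofReal (hf_class r)) (by positivity)
        _ = ENNReal.ofReal (Real.exp (0.75 * t ^ 2 * (cls r).card * (K:ℝ)⁻¹)) := by
            rw [ENNReal.ofReal_rpow_of_pos (Real.exp_pos _), ← Real.exp_mul]
    calc ∏ r ∈ Finset.range K, (∫⁻ ω, ENNReal.ofReal (f r ω) ∂P) ^ ((K:ℝ)⁻¹)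
        ≤ ∏ r ∈ Finset.range K,
            ENNReal.ofReal (Real.exp (0.75 * t ^ 2 * (cls r).card * (K:ℝ)⁻¹)) :=
          Finset.prod_le_prod' h1
      _ = ENNReal.ofReal (Real.exp (0.75 * t ^ 2 * N / K)) := by
          rw [← ENNReal.ofReal_prod_of_nonneg (fun r _ => (Real.exp_pos _).le), ← Real.exp_sum]
          congr 1
          have e2 : ∑ r ∈ Finset.range K, 0.75 * t ^ 2 * ((cls r).card : ℝ) * (K:ℝ)⁻¹
              = 0.75 * t ^ 2 * ((N:ℝ)) / K := by
            rw [← Finset.sum_mul, ← Finset.mul_sum, hcard]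
            ring
          rw [e2]
  have hfinal : ENNReal.ofReal
        (∫ ω, Real.exp (lam * ∑ n ∈ Finset.Icc (1:ℤ) N, X n ω) ∂P)
      ≤ ENNReal.ofReal (Real.exp (0.75 * t ^ 2 * N / K)) := by
    rw [← hLHS]
    exact hhold.trans hRHS
  exact (ENNReal.ofReal_le_ofReal_iff (Real.exp_pos _).le).1 hfinal

set_option maxHeartbeats 1000000 in
theorem lln_K_steps_ahead
    {Ω : Type*} [m0 : MeasurableSpace Ω] (P : Measure Ω) [IsProbabilityMeasure P]
    (ℱ : Filtration ℤ m0) (K : ℕ) (hK : 1 ≤ K) (N : ℕ)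
    (Y : ℤ → Ω → ℝ)
    (hadapt : ∀ n : ℤ, StronglyMeasurable[ℱ n] (Y n))
    (hbdd : ∀ n : ℤ, ∀ᵐ ω ∂P, |Y n ω| ≤ 1)
    (ε : ℝ) (hε : ε ∈ Set.Ioo (0 : ℝ) 0.7) :
    P {ω | 4 * Real.sqrt (K * (N + K) * Real.log (1 / ε)) ≤
        |∑ n ∈ Finset.Icc (1 : ℤ) N, (Y n ω - (P[Y n|ℱ (n - K)]) ω)|}
      < ENNReal.ofReal ε := by
  obtain ⟨hε0, hε7⟩ := hε
  have hL0 : 0 < Real.log (1 / ε) := Real.log_pos (by rw [lt_div_iff₀ hε0]; linarith)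
  set L : ℝ := Real.log (1 / ε) with hLdef
  set T : ℝ := 4 * Real.sqrt (K * (N + K) * L) with hTdef
  set S : Ω → ℝ := fun ω => ∑ n ∈ Finset.Icc (1 : ℤ) N, (Y n ω - (P[Y n|ℱ (n - K)]) ω)
    with hSdef
  have hKR : (0:ℝ) < K := by exact_mod_cast hK
  have harg : (0:ℝ) < K * (N + K) * L := by
    apply mul_pos (mul_pos hKR _) hL0
    have : (0:ℝ) ≤ N := Nat.cast_nonneg N
    linarith
  have hTpos : 0 < T := by
    rw [hTdef]
    positivity
  have hT2 : T ^ 2 = 16 * (K * (N + K) * L) := by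
    rw [hTdef, mul_pow, Real.sq_sqrt harg.le]
    ring
  have hYint : ∀ n : ℤ, Integrable (Y n) P := fun n =>
    my_integrable_of_bound P ((hadapt n).mono (ℱ.le n)).aestronglyMeasurable 1 (hbdd n)
  have hXb : ∀ᵐ ω ∂P, ∀ n : ℤ, |Y n ω - (P[Y n|ℱ (n - K)]) ω| ≤ 2 := by
    rw [ae_all_iff]
    intro n
    filter_upwards [hbdd n, my_condexp_abs_le_one P (ℱ.le (n - K)) (hYint n) (hbdd n)]
      with ω h1 h2
    have e1 := abs_le.1 h1
    have e2 := abs_le.1 h2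
    rw [abs_le]; constructor <;> [linarith; linarith]
  have hcardIcc : (((Finset.Icc (1:ℤ) N).card) : ℝ) = N := by
    rw [Int.card_Icc]
    simp
  have hSb : ∀ᵐ ω ∂P, |S ω| ≤ 2 * N := by
    filter_upwards [hXb] with ω hω
    calc |S ω| ≤ ∑ n ∈ Finset.Icc (1:ℤ) N, |Y n ω - (P[Y n|ℱ (n - K)]) ω| :=
          Finset.abs_sum_le_sum_abs _ _
      _ ≤ ∑ _n ∈ Finset.Icc (1:ℤ) N, (2:ℝ) := Finset.sum_le_sum fun n _ => hω n
      _ = 2 * N := by rw [Finset.sum_const]; simp [hcardIcc, mul_comm]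
  by_cases hcase : 2 * (N:ℝ) < T
  · -- deterministic case : the event is null
    have hnull : P {ω | T ≤ |S ω|} = 0 := by
      rw [measure_eq_zero_iff_ae_notMem]
      filter_upwards [hSb] with ω hω
      simp only [Set.mem_setOf_eq, not_le]
      linarith
    rw [hnull]
    exact ENNReal.ofReal_pos.2 hε0
  · push_neg at hcase
    have hN1 : (1:ℝ) ≤ N := by
      by_contra h
      push_neg at h
      have hN0 : (N:ℝ) = 0 := by
        have : N = 0 := by exact_mod_cast (by omega : N < 1 → N = 0) (by exact_mod_cast h)
        exact_mod_cast this
      rw [hN0] at hcase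
      linarith
    have hNR : (0:ℝ) < N := by linarith
    set lam : ℝ := T / (2 * K * N) with hlamdef
    have hlam0 : 0 ≤ lam := by positivity
    have hlamK : lam * K = T / (2 * N) := by
      rw [hlamdef]
      field_simp
    have hlamK1 : |lam * K| ≤ 1 := by
      rw [hlamK, abs_of_nonneg (by positivity)]
      rw [div_le_one (by positivity)]
      linarith
    have hlam1 : |lam| ≤ 1 := by
      have h2 : |lam| * 1 ≤ |lam| * K := mul_le_mul_of_nonneg_left (by exact_mod_cast hK)
        (abs_nonneg lam)
      calc |lam| = |lam| * 1 := (mul_one _).symm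
        _ ≤ |lam| * K := h2
        _ = |lam * K| := by rw [abs_mul, abs_of_pos hKR]
        _ ≤ 1 := hlamK1
    -- integrability of the exponential moments
    have hSsm : StronglyMeasurable[m0] S := by
      apply Finset.stronglyMeasurable_fun_sum
      intro n _
      exact ((hadapt n).mono (ℱ.le n)).sub (stronglyMeasurable_condExp.mono (ℱ.le (n - K)))
    have hint_exp : ∀ c : ℝ, |c| ≤ 1 → Integrable (fun ω => Real.exp (c * S ω)) P := by
      intro c hc
      apply my_integrable_of_bound P
        ((Real.continuous_exp.comp_stronglyMeasurable (hSsm.const_mul c)).aestronglyMeasurable)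
        (Real.exp (2 * N))
      filter_upwards [hSb] with ω hω
      rw [abs_of_pos (Real.exp_pos _)]
      apply Real.exp_le_exp.2
      calc c * S ω ≤ |c * S ω| := le_abs_self _
        _ = |c| * |S ω| := abs_mul _ _
        _ ≤ 1 * (2 * N) := mul_le_mul hc hω (abs_nonneg _) zero_le_one
        _ = 2 * N := one_mul _
    -- the upper tail
    have hup : (P {ω | T ≤ S ω}).toReal
        ≤ Real.exp (-lam * T) * Real.exp (0.75 * (lam * K) ^ 2 * N / K) := by
      have h1 := measure_ge_le_exp_mul_mgf (X := S) (μ := P) (t := lam) T hlam0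
        (hint_exp lam hlam1)
      have h2 : mgf S P lam ≤ Real.exp (0.75 * (lam * K) ^ 2 * N / K) :=
        mgf_bound P ℱ K hK N Y hadapt hbdd lam hlamK1
      calc (P {ω | T ≤ S ω}).toReal ≤ Real.exp (-lam * T) * mgf S P lam := h1
        _ ≤ Real.exp (-lam * T) * Real.exp (0.75 * (lam * K) ^ 2 * N / K) :=
            mul_le_mul_of_nonneg_left h2 (Real.exp_pos _).le
    -- the lower tail
    have hneg_ae : ∀ᵐ ω ∂P, ∑ n ∈ Finset.Icc (1:ℤ) N,
        ((-Y n) ω - (P[-Y n|ℱ (n - K)]) ω) = -S ω := by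
      have h := ae_all_iff.2 (fun n : ℤ => condExp_neg (μ := P) (m := ℱ (n - K)) (Y n))
      filter_upwards [h] with ω hω
      rw [hSdef, ← Finset.sum_neg_distrib]
      apply Finset.sum_congr rfl
      intro n _
      have := hω n
      simp only [Pi.neg_apply] at this ⊢
      rw [this]
      ring
    have hdown : (P {ω | T ≤ -S ω}).toReal
        ≤ Real.exp (-lam * T) * Real.exp (0.75 * (lam * K) ^ 2 * N / K) := by
      have hint' : Integrable (fun ω => Real.exp (lam * (-S ω))) P := by
        have := hint_exp (-lam) (by rwa [abs_neg])
        apply this.congr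
        filter_upwards with ω
        ring_nf
      have h1 := measure_ge_le_exp_mul_mgf (X := fun ω => -S ω) (μ := P) (t := lam) T hlam0 hint'
      have h2 : mgf (fun ω => -S ω) P lam ≤ Real.exp (0.75 * (lam * K) ^ 2 * N / K) := by
        have h3 := mgf_bound P ℱ K hK N (fun n => -Y n) (fun n => (hadapt n).neg)
          (fun n => by filter_upwards [hbdd n] with ω hω; simpa using hω) lam hlamK1
        have h4 : mgf (fun ω => -S ω) P lam
            = ∫ ω, Real.exp (lam * ∑ n ∈ Finset.Icc (1:ℤ) N,
                ((-Y n) ω - (P[-Y n|ℱ (n - K)]) ω)) ∂P := by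
          apply integral_congr_ae
          filter_upwards [hneg_ae] with ω hω
          rw [hω]
        rw [h4]
        exact h3
      calc (P {ω | T ≤ -S ω}).toReal ≤ Real.exp (-lam * T) * mgf (fun ω => -S ω) P lam := h1
        _ ≤ Real.exp (-lam * T) * Real.exp (0.75 * (lam * K) ^ 2 * N / K) :=
            mul_le_mul_of_nonneg_left h2 (Real.exp_pos _).le
    -- numeric bound on the exponent
    have hexp_le : Real.exp (-lam * T) * Real.exp (0.75 * (lam * K) ^ 2 * N / K) ≤ ε ^ 5 := by
      rw [← Real.exp_add]
      have key : -lam * T + 0.75 * (lam * K) ^ 2 * N / K = -(5/16) * (T ^ 2 / (K * N)) := by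
        rw [hlamdef]
        field_simp
        ring
      have h2 : 16 * L ≤ T ^ 2 / (K * N) := by
        rw [hT2, le_div_iff₀ (by positivity)]
        have : (0:ℝ) ≤ K * K * L := by positivity
        nlinarith
      have h3 : -lam * T + 0.75 * (lam * K) ^ 2 * N / K ≤ -5 * L := by
        rw [key]
        nlinarith
      calc Real.exp (-lam * T + 0.75 * (lam * K) ^ 2 * N / K) ≤ Real.exp (-5 * L) :=
            Real.exp_le_exp.2 h3
        _ = ε ^ 5 := by
            rw [hLdef, one_div, Real.log_inv]
            rw [show (-5 : ℝ) * -Real.log ε = (5:ℕ) * Real.log ε by push_cast; ring]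
            rw [Real.exp_nat_mul, Real.exp_log hε0]
    -- assemble
    have hsubset : {ω | T ≤ |S ω|} ⊆ {ω | T ≤ S ω} ∪ {ω | T ≤ -S ω} := by
      intro ω hω
      simp only [Set.mem_setOf_eq] at hω
      rcases le_abs.1 hω with h | h
      · exact Or.inl h
      · exact Or.inr h
    have hone : ∀ (A : Set Ω), P A ≤ ENNReal.ofReal ((P A).toReal) := by
      intro A
      rw [ENNReal.ofReal_toReal (measure_ne_top P A)]
    calc P {ω | T ≤ |S ω|} ≤ P ({ω | T ≤ S ω} ∪ {ω | T ≤ -S ω}) := measure_mono hsubset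
      _ ≤ P {ω | T ≤ S ω} + P {ω | T ≤ -S ω} := measure_union_le _ _
      _ ≤ ENNReal.ofReal ((P {ω | T ≤ S ω}).toReal)
          + ENNReal.ofReal ((P {ω | T ≤ -S ω}).toReal) := add_le_add (hone _) (hone _)
      _ ≤ ENNReal.ofReal (ε ^ 5) + ENNReal.ofReal (ε ^ 5) := by
          have e1 : (P {ω | T ≤ S ω}).toReal ≤ ε ^ 5 := hup.trans hexp_le
          have e2 : (P {ω | T ≤ -S ω}).toReal ≤ ε ^ 5 := hdown.trans hexp_le
          exact add_le_add (ENNReal.ofReal_le_ofReal e1) (ENNReal.ofReal_le_ofReal e2)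
      _ = ENNReal.ofReal (2 * ε ^ 5) := by
          rw [← ENNReal.ofReal_add (by positivity) (by positivity)]
          congr 1
          ring
      _ < ENNReal.ofReal ε := by
          rw [ENNReal.ofReal_lt_ofReal_iff hε0]
          have h4 : ε ^ 4 ≤ (0.7:ℝ) ^ 4 := by
            apply pow_le_pow_left₀ hε0.le hε7.le
          nlinarith
end

section
/- Let $(\Omega,\mathcal{F},P)$ be a probability space with filtration $(\mathcal{F}_n)_{n\in\mathbb{Z}}$, $K \ge 1$ an integer, and $Y_1,\dots,Y_N$ an adapted sequence with $|Y_n| \le 1$ a.s. Suppose additionally $\mathbb{E}(Y_n \mid \mathcal{F}_{n-K}) \le 0$ a.s. for all $n$. Then for any $\epsilon \in (0,0.7)$, $P\left(\sum_{n=1}^N Y_n \ge 4\sqrt{K(N+K)\ln(1/\epsilon)}\right) < \epsilon/2$. -/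
open MeasureTheory ProbabilityTheory Real

lemma exp_mul_le_cosh_add {θ x : ℝ} (hx : |x| ≤ 1) :
    Real.exp (θ * x) ≤ Real.cosh θ + x * Real.sinh θ := by
  obtain ⟨h1, h2⟩ := abs_le.mp hx
  have := convexOn_exp.2 (x := -θ) (y := θ) (Set.mem_univ (-θ)) (Set.mem_univ θ)
    (show (0:ℝ) ≤ (1 - x) / 2 by linarith) (show (0:ℝ) ≤ (1 + x) / 2 by linarith)
    (show (1 - x) / 2 + (1 + x) / 2 = 1 by ring)
  simp only [smul_eq_mul] at this
  calc Real.exp (θ * x) = Real.exp ((1 - x)/2 * (-θ) + (1 + x)/2 * θ) := by ring_nf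
    _ ≤ (1 - x)/2 * Real.exp (-θ) + (1 + x)/2 * Real.exp θ := this
    _ = Real.cosh θ + x * Real.sinh θ := by rw [Real.cosh_eq, Real.sinh_eq]; ring

lemma condexp_exp_le {Ω : Type*} [m0 : MeasurableSpace Ω] (P : Measure Ω)
    [IsProbabilityMeasure P] {m : MeasurableSpace Ω} (hm : m ≤ m0) {X : Ω → ℝ}
    (hX : @AEStronglyMeasurable Ω ℝ _ m0 m0 X P) (hbdd : ∀ᵐ ω ∂P, |X ω| ≤ 1)
    (hneg : ∀ᵐ ω ∂P, (P[X|m]) ω ≤ 0) {θ : ℝ} (hθ : 0 ≤ θ) :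
    ∀ᵐ ω ∂P, (P[fun ω => Real.exp (θ * X ω)|m]) ω ≤ Real.exp (θ^2/2) := by
  have hXi : Integrable X P := (integrable_const 1).mono' hX (by simpa using hbdd)
  have hexpm : @AEStronglyMeasurable Ω ℝ _ m0 m0 (fun ω => Real.exp (θ * X ω)) P :=
    Real.continuous_exp.comp_aestronglyMeasurable (hX.const_mul θ)
  have hexpi : Integrable (fun ω => Real.exp (θ * X ω)) P := by
    refine (integrable_const (Real.exp θ)).mono' hexpm ?_
    filter_upwards [hbdd] with ω hω
    rw [Real.norm_eq_abs, abs_of_pos (Real.exp_pos _)]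
    exact Real.exp_le_exp.mpr (by nlinarith [abs_le.mp hω])
  have hgi : Integrable (fun ω => Real.cosh θ + Real.sinh θ * X ω) P :=
    (integrable_const _).add (hXi.const_mul _)
  have hmono : (P[fun ω => Real.exp (θ * X ω)|m]) ≤ᵐ[P]
      (P[fun ω => Real.cosh θ + Real.sinh θ * X ω|m]) := by
    refine condExp_mono hexpi hgi ?_
    filter_upwards [hbdd] with ω hω
    simpa [mul_comm] using exp_mul_le_cosh_add (θ := θ) hω
  have heq : (P[fun ω => Real.cosh θ + Real.sinh θ * X ω|m]) =ᵐ[P]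
      fun ω => Real.cosh θ + Real.sinh θ * (P[X|m]) ω := by
    refine (condExp_add (integrable_const _) (hXi.const_mul _) m).trans ?_
    have h1 : (P[fun _ => Real.cosh θ|m]) = fun _ => Real.cosh θ := condExp_const hm _
    have h2 : (P[fun ω => Real.sinh θ * X ω|m]) =ᵐ[P]
        fun ω => Real.sinh θ * (P[X|m]) ω := by
      exact condExp_smul (μ := P) (m := m) (Real.sinh θ) X
    filter_upwards [h2] with ω h2ω
    simp [h1, h2ω]
  filter_upwards [hmono, heq, hneg] with ω h1 h2 h3
  calc (P[fun ω => Real.exp (θ * X ω)|m]) ω ≤ Real.cosh θ + Real.sinh θ * (P[X|m]) ω :=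
        h1.trans_eq h2
    _ ≤ Real.cosh θ := by nlinarith [Real.sinh_nonneg_iff.mpr hθ]
    _ ≤ Real.exp (θ^2/2) := Real.cosh_le_exp_half_sq θ

lemma class_mgf {Ω : Type*} [m0 : MeasurableSpace Ω] (P : Measure Ω) [IsProbabilityMeasure P]
    (ℱ : Filtration ℤ m0) (K : ℕ) (Y : ℤ → Ω → ℝ)
    (hadapt : ∀ n : ℤ, StronglyMeasurable[ℱ n] (Y n))
    (hbdd : ∀ n : ℤ, ∀ᵐ ω ∂P, |Y n ω| ≤ 1)
    (hneg : ∀ n : ℤ, ∀ᵐ ω ∂P, (P[Y n|ℱ (n - K)]) ω ≤ 0)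
    {θ : ℝ} (hθ : 0 ≤ θ) (r : ℕ) (M : ℕ) :
    ∫ ω, Real.exp (θ * ∑ i ∈ (Finset.range M).filter (fun i => i % K = r), Y ((i:ℤ)+1) ω) ∂P
      ≤ Real.exp (θ^2/2) ^ ((Finset.range M).filter (fun i => i % K = r)).card := by
  induction M with
  | zero => simp
  | succ M IH =>
    by_cases hMr : M % K = r
    swap
    · rw [Finset.range_add_one, Finset.filter_insert, if_neg hMr]
      exact IH
    rw [Finset.range_add_one, Finset.filter_insert, if_pos hMr]
    set s := (Finset.range M).filter (fun i => i % K = r) with hs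
    have hMs : M ∉ s := by simp [hs]
    simp only [Finset.sum_insert hMs, Finset.card_insert_of_notMem hMs]
    set G := ℱ (((M:ℕ):ℤ) + 1 - (K:ℤ)) with hG
    have hm : G ≤ m0 := ℱ.le _
    set F := fun ω => ∑ i ∈ s, Y ((i:ℤ)+1) ω with hF
    set f := fun ω => Real.exp (θ * F ω) with hf
    set g := fun ω => Real.exp (θ * Y ((M:ℤ)+1) ω) with hg
    -- measurability of Y (i+1) wrt G for i ∈ s
    have hmeas : ∀ i ∈ s, StronglyMeasurable[G] (Y ((i:ℤ)+1)) := by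
      intro i hi
      simp only [hs, Finset.mem_filter, Finset.mem_range] at hi
      obtain ⟨hiM, hir⟩ := hi
      have hdvd : K ∣ M - i := (Nat.modEq_iff_dvd' hiM.le).mp (hir.trans hMr.symm)
      have hKle : K ≤ M - i := Nat.le_of_dvd (Nat.sub_pos_of_lt hiM) hdvd
      have : ((i:ℤ)+1) ≤ ((M:ℕ):ℤ) + 1 - (K:ℤ) := by omega
      exact (hadapt _).mono (ℱ.mono this)
    have hFsm : StronglyMeasurable[G] F := Finset.stronglyMeasurable_fun_sum _ hmeas
    have hfsm : StronglyMeasurable[G] f :=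
      Real.continuous_exp.comp_stronglyMeasurable (hFsm.const_mul θ)
    have hfm0 : @AEStronglyMeasurable Ω ℝ _ m0 m0 f P := (hfsm.mono hm).aestronglyMeasurable
    have hYM : @AEStronglyMeasurable Ω ℝ _ m0 m0 (Y ((M:ℤ)+1)) P :=
      ((hadapt _).mono (ℱ.le _)).aestronglyMeasurable
    have hgm0 : @AEStronglyMeasurable Ω ℝ _ m0 m0 g P :=
      Real.continuous_exp.comp_aestronglyMeasurable (hYM.const_mul θ)
    -- a.e. bounds
    have hFb : ∀ᵐ ω ∂P, |F ω| ≤ (s.card : ℝ) := by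
      have h : ∀ᵐ ω ∂P, ∀ i ∈ (s : Set ℕ), |Y ((i:ℤ)+1) ω| ≤ 1 :=
        (ae_ball_iff (Set.to_countable (s : Set ℕ))).mpr fun i _ => hbdd ((i:ℤ)+1)
      filter_upwards [h] with ω hω
      calc |F ω| ≤ ∑ i ∈ s, |Y ((i:ℤ)+1) ω| := Finset.abs_sum_le_sum_abs _ _
        _ ≤ ∑ _i ∈ s, (1:ℝ) := Finset.sum_le_sum fun i hi => hω i hi
        _ = s.card := by simp
    have hfb : ∀ᵐ ω ∂P, ‖f ω‖ ≤ Real.exp (θ * s.card) := by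
      filter_upwards [hFb] with ω hω
      rw [Real.norm_eq_abs, abs_of_pos (Real.exp_pos _)]
      exact Real.exp_le_exp.mpr (by nlinarith [abs_le.mp hω])
    have hgb : ∀ᵐ ω ∂P, ‖g ω‖ ≤ Real.exp θ := by
      filter_upwards [hbdd ((M:ℤ)+1)] with ω hω
      rw [Real.norm_eq_abs, abs_of_pos (Real.exp_pos _)]
      exact Real.exp_le_exp.mpr (by nlinarith [abs_le.mp hω])
    have hfi : Integrable f P := (integrable_const _).mono' hfm0 hfb
    have hgi : Integrable g P := (integrable_const _).mono' hgm0 hgb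
    have hfgi : Integrable (f * g) P := by
      refine (integrable_const (Real.exp (θ * s.card) * Real.exp θ)).mono' (hfm0.mul hgm0) ?_
      filter_upwards [hfb, hgb] with ω h1 h2
      calc ‖f ω * g ω‖ = ‖f ω‖ * ‖g ω‖ := norm_mul _ _
        _ ≤ Real.exp (θ * s.card) * Real.exp θ :=
          mul_le_mul h1 h2 (norm_nonneg _) (Real.exp_pos _).le
    -- conditional bound
    have hneg' : ∀ᵐ ω ∂P, (P[Y ((M:ℤ)+1)|G]) ω ≤ 0 := hneg ((M:ℤ)+1)
    have hcond : ∀ᵐ ω ∂P, (P[g|G]) ω ≤ Real.exp (θ^2/2) := by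
      exact condexp_exp_le (m0 := m0) P hm hYM (hbdd ((M:ℤ)+1)) hneg' hθ
    have hpull : (P[f * g|G]) =ᵐ[P] f * (P[g|G]) :=
      condExp_stronglyMeasurable_mul_of_bound hm hfsm hgi _ hfb
    have hint1 : Integrable (f * (P[g|G])) P :=
      Integrable.congr (integrable_condExp (m := G) (f := f * g) (μ := P)) hpull
    -- main computation
    have key : ∫ ω, f ω * g ω ∂P ≤ Real.exp (θ^2/2) * ∫ ω, f ω ∂P := by
      calc ∫ ω, f ω * g ω ∂P = ∫ ω, (P[f * g|G]) ω ∂P := (integral_condExp hm).symm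
        _ = ∫ ω, f ω * (P[g|G]) ω ∂P := integral_congr_ae hpull
        _ ≤ ∫ ω, f ω * Real.exp (θ^2/2) ∂P := by
            refine integral_mono_ae hint1 (hfi.mul_const _) ?_
            filter_upwards [hcond] with ω hω
            exact mul_le_mul_of_nonneg_left hω (Real.exp_pos _).le
        _ = Real.exp (θ^2/2) * ∫ ω, f ω ∂P := by rw [integral_mul_const]; ring
    calc ∫ ω, Real.exp (θ * (Y ((M:ℤ)+1) ω + ∑ i ∈ s, Y ((i:ℤ)+1) ω)) ∂P
        = ∫ ω, f ω * g ω ∂P := by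
          refine integral_congr_ae (Filter.Eventually.of_forall fun ω => ?_)
          simp only [hf, hg, hF, Pi.mul_apply, ← Real.exp_add]
          congr 1
          ring
      _ ≤ Real.exp (θ^2/2) * ∫ ω, f ω ∂P := key
      _ ≤ Real.exp (θ^2/2) * Real.exp (θ^2/2) ^ s.card :=
          mul_le_mul_of_nonneg_left IH (Real.exp_pos _).le
      _ = Real.exp (θ^2/2) ^ (s.card + 1) := by ring

theorem one_sided_lln_K_steps_ahead
    {Ω : Type*} [m0 : MeasurableSpace Ω] (P : Measure Ω) [IsProbabilityMeasure P]
    (ℱ : Filtration ℤ m0) (K : ℕ) (hK : 1 ≤ K) (N : ℕ)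
    (Y : ℤ → Ω → ℝ)
    (hadapt : ∀ n : ℤ, StronglyMeasurable[ℱ n] (Y n))
    (hbdd : ∀ n : ℤ, ∀ᵐ ω ∂P, |Y n ω| ≤ 1)
    (hneg : ∀ n : ℤ, ∀ᵐ ω ∂P, (P[Y n|ℱ (n - K)]) ω ≤ 0)
    (ε : ℝ) (hε : ε ∈ Set.Ioo (0 : ℝ) 0.7) :
    P {ω | 4 * Real.sqrt (K * (N + K) * Real.log (1 / ε)) ≤
        ∑ n ∈ Finset.Icc (1 : ℤ) N, Y n ω}
      < ENNReal.ofReal (ε / 2) := by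
  obtain ⟨hε0, hε7⟩ := hε
  have hε1 : ε < 1 := by norm_num at hε7; linarith
  have h1ε : 1 < 1/ε := by rw [lt_div_iff₀ hε0]; linarith
  have hL : 0 < Real.log (1/ε) := Real.log_pos h1ε
  have hK0 : 0 < K := hK
  have hKR : (0:ℝ) < (K:ℝ) := by exact_mod_cast hK0
  set L := Real.log (1/ε) with hLdef
  set t := 4 * Real.sqrt ((K:ℝ) * ((N:ℝ) + (K:ℝ)) * L) with htdef
  have hNKR : (0:ℝ) < (N:ℝ) + (K:ℝ) := by
    have : (0:ℝ) ≤ (N:ℝ) := Nat.cast_nonneg N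
    linarith
  have hNK : (0:ℝ) < (K:ℝ) * ((N:ℝ) + (K:ℝ)) * L := mul_pos (mul_pos hKR hNKR) hL
  have ht : 0 < t := by
    rw [htdef]
    have := Real.sqrt_pos.mpr hNK
    linarith
  by_cases hN0 : N = 0
  · have hempty : Finset.Icc (1:ℤ) (N:ℤ) = ∅ := by
      apply Finset.Icc_eq_empty
      simp [hN0]
    have hset : {ω | t ≤ ∑ n ∈ Finset.Icc (1:ℤ) (N:ℤ), Y n ω} = ∅ := by
      ext ω
      simp only [Set.mem_setOf_eq, Set.mem_empty_iff_false, iff_false, not_le, hempty,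
        Finset.sum_empty]
      exact ht
    rw [hset, measure_empty]
    exact ENNReal.ofReal_pos.mpr (by linarith)
  · have hN : 0 < N := Nat.pos_of_ne_zero hN0
    have hNR : (0:ℝ) < (N:ℝ) := by exact_mod_cast hN
    set lam := t / ((K:ℝ) * (N:ℝ)) with hlamdef
    have hlam0 : 0 < lam := div_pos ht (by positivity)
    set S : Ω → ℝ := fun ω => ∑ i ∈ Finset.range N, Y ((i:ℤ)+1) ω with hSdef
    set Sc : ℕ → Ω → ℝ :=
      fun r ω => ∑ i ∈ (Finset.range N).filter (fun i => i % K = r), Y ((i:ℤ)+1) ω with hScdef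
    have hIcc : Finset.Icc (1:ℤ) (N:ℤ) =
        (Finset.range N).map ⟨fun i : ℕ => (i:ℤ)+1, fun a b h => by simpa using h⟩ := by
      ext n
      simp only [Finset.mem_Icc, Finset.mem_map, Finset.mem_range, Function.Embedding.coeFn_mk]
      constructor
      · rintro ⟨h1, h2⟩
        exact ⟨(n-1).toNat, by omega, show ((n-1).toNat : ℤ) + 1 = n by omega⟩
      · rintro ⟨i, hi, rfl⟩
        show 1 ≤ (i:ℤ)+1 ∧ (i:ℤ)+1 ≤ N
        omega
    have hsum : ∀ ω, ∑ n ∈ Finset.Icc (1:ℤ) (N:ℤ), Y n ω = S ω := by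
      intro ω
      rw [hIcc, Finset.sum_map]
      rfl
    have hpart : ∀ ω, ∑ r ∈ Finset.range K, Sc r ω = S ω := fun ω =>
      Finset.sum_fiberwise_of_maps_to (fun i _ => Finset.mem_range.mpr (Nat.mod_lt i hK0)) _
    have hcard : ∑ r ∈ Finset.range K, ((Finset.range N).filter (fun i => i % K = r)).card = N := by
      rw [Finset.sum_card_fiberwise_eq_card_filter,
        Finset.filter_true_of_mem (fun i _ => Finset.mem_range.mpr (Nat.mod_lt i hK0)),
        Finset.card_range]
    have hYm : ∀ n : ℤ, Measurable (Y n) := fun n => ((hadapt n).mono (ℱ.le n)).measurable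
    have hScm : ∀ r, Measurable (Sc r) := fun r => Finset.measurable_sum _ fun i _ => hYm _
    have hSm : Measurable S := Finset.measurable_sum _ fun i _ => hYm _
    have hbddAll : ∀ᵐ ω ∂P, ∀ i ∈ ((Finset.range N : Finset ℕ) : Set ℕ), |Y ((i:ℤ)+1) ω| ≤ 1 :=
      (ae_ball_iff (Set.to_countable _)).mpr fun i _ => hbdd _
    have hScb : ∀ r, ∀ᵐ ω ∂P, |Sc r ω| ≤ (N:ℝ) := by
      intro r
      filter_upwards [hbddAll] with ω hω
      calc |Sc r ω| ≤ ∑ i ∈ (Finset.range N).filter (fun i => i % K = r), |Y ((i:ℤ)+1) ω| :=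
            Finset.abs_sum_le_sum_abs _ _
        _ ≤ ∑ _i ∈ (Finset.range N).filter (fun i => i % K = r), (1:ℝ) :=
            Finset.sum_le_sum fun i hi => hω i (Finset.mem_filter.mp hi).1
        _ = ((Finset.range N).filter (fun i => i % K = r)).card := by simp
        _ ≤ (N:ℝ) := by
            have := Finset.card_filter_le (Finset.range N) (fun i => i % K = r)
            rw [Finset.card_range] at this
            exact_mod_cast this
    have hInt : ∀ r, Integrable (fun ω => Real.exp (((K:ℝ)*lam) * Sc r ω)) P := by
      intro r
      refine (integrable_const (Real.exp (((K:ℝ)*lam) * N))).mono'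
        (Real.continuous_exp.comp_aestronglyMeasurable
          (((hScm r).aestronglyMeasurable).const_mul _)) ?_
      filter_upwards [hScb r] with ω hω
      rw [Real.norm_eq_abs, abs_of_pos (Real.exp_pos _)]
      refine Real.exp_le_exp.mpr (mul_le_mul_of_nonneg_left ?_ (by positivity))
      exact (le_abs_self _).trans hω
    have hclass : ∀ r, ∫ ω, Real.exp (((K:ℝ)*lam) * Sc r ω) ∂P ≤
        Real.exp (((K:ℝ)*lam)^2/2) ^ ((Finset.range N).filter (fun i => i % K = r)).card :=
      fun r => class_mgf P ℱ K Y hadapt hbdd hneg (by positivity) r N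
    have hKne : (K:ℝ) ≠ 0 := hKR.ne'
    have hmain : ∫⁻ ω, ENNReal.ofReal (Real.exp (lam * S ω)) ∂P ≤
        ENNReal.ofReal (Real.exp ((K:ℝ) * (N:ℝ) * lam^2 / 2)) := by
      calc ∫⁻ ω, ENNReal.ofReal (Real.exp (lam * S ω)) ∂P
          = ∫⁻ ω, ∏ r ∈ Finset.range K,
              (ENNReal.ofReal (Real.exp (((K:ℝ)*lam) * Sc r ω))) ^ ((1:ℝ)/(K:ℝ)) ∂P := by
            refine lintegral_congr fun ω => ?_
            have hfac : ∀ r ∈ Finset.range K,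
                (ENNReal.ofReal (Real.exp (((K:ℝ)*lam) * Sc r ω))) ^ ((1:ℝ)/(K:ℝ)) =
                  ENNReal.ofReal (Real.exp (lam * Sc r ω)) := by
              intro r _
              rw [ENNReal.ofReal_rpow_of_pos (Real.exp_pos _), ← Real.exp_mul]
              congr 1
              field_simp
            rw [Finset.prod_congr rfl hfac,
              ← ENNReal.ofReal_prod_of_nonneg (fun r _ => (Real.exp_pos _).le),
              ← Real.exp_sum]
            congr 2
            rw [← hpart ω, Finset.mul_sum]
        _ ≤ ∏ r ∈ Finset.range K,
              (∫⁻ ω, ENNReal.ofReal (Real.exp (((K:ℝ)*lam) * Sc r ω)) ∂P) ^ ((1:ℝ)/(K:ℝ)) := by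
            refine ENNReal.lintegral_prod_norm_pow_le _ ?_ ?_ ?_
            · exact fun r _ => ((Real.measurable_exp.comp
                ((hScm r).const_mul _)).ennreal_ofReal).aemeasurable
            · rw [Finset.sum_const, Finset.card_range, nsmul_eq_mul]
              field_simp
            · exact fun r _ => by positivity
        _ ≤ ∏ r ∈ Finset.range K, ENNReal.ofReal (Real.exp ((K:ℝ) * lam^2 / 2 *
              (((Finset.range N).filter (fun i => i % K = r)).card : ℝ))) := by
            refine Finset.prod_le_prod' fun r _ => ?_
            have h1 : ∫⁻ ω, ENNReal.ofReal (Real.exp (((K:ℝ)*lam) * Sc r ω)) ∂P =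
                ENNReal.ofReal (∫ ω, Real.exp (((K:ℝ)*lam) * Sc r ω) ∂P) :=
              (MeasureTheory.ofReal_integral_eq_lintegral_ofReal (hInt r)
                (Filter.Eventually.of_forall fun ω => (Real.exp_pos _).le)).symm
            rw [h1]
            set m := ((Finset.range N).filter (fun i => i % K = r)).card with hm
            calc (ENNReal.ofReal (∫ ω, Real.exp (((K:ℝ)*lam) * Sc r ω) ∂P)) ^ ((1:ℝ)/(K:ℝ))
                ≤ (ENNReal.ofReal (Real.exp (((K:ℝ)*lam)^2/2) ^ m)) ^ ((1:ℝ)/(K:ℝ)) :=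
                  ENNReal.rpow_le_rpow (ENNReal.ofReal_le_ofReal (hclass r)) (by positivity)
              _ = ENNReal.ofReal (Real.exp ((K:ℝ) * lam^2 / 2 * (m:ℝ))) := by
                  rw [← Real.exp_nat_mul, ENNReal.ofReal_rpow_of_pos (Real.exp_pos _),
                    ← Real.exp_mul]
                  congr 1
                  field_simp
        _ = ENNReal.ofReal (Real.exp ((K:ℝ) * (N:ℝ) * lam^2 / 2)) := by
            rw [← ENNReal.ofReal_prod_of_nonneg (fun r _ => (Real.exp_pos _).le),
              ← Real.exp_sum, ← Finset.mul_sum]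
            congr 2
            have : ∑ r ∈ Finset.range K,
                ((((Finset.range N).filter (fun i => i % K = r)).card : ℕ) : ℝ) = (N:ℝ) := by
              exact_mod_cast congrArg (Nat.cast : ℕ → ℝ) hcard
            rw [this]
            ring
    have hAEm : AEMeasurable (fun ω => ENNReal.ofReal (Real.exp (lam * S ω))) P :=
      ((Real.measurable_exp.comp (hSm.const_mul lam)).ennreal_ofReal).aemeasurable
    have hmark := mul_meas_ge_le_lintegral₀ hAEm (ENNReal.ofReal (Real.exp (lam * t)))
    have hsub : {ω | t ≤ ∑ n ∈ Finset.Icc (1:ℤ) (N:ℤ), Y n ω} ⊆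
        {ω | ENNReal.ofReal (Real.exp (lam * t)) ≤ ENNReal.ofReal (Real.exp (lam * S ω))} := by
      intro ω hω
      simp only [Set.mem_setOf_eq] at hω ⊢
      rw [hsum ω] at hω
      exact ENNReal.ofReal_le_ofReal (Real.exp_le_exp.mpr (mul_le_mul_of_nonneg_left hω hlam0.le))
    have hPle : P {ω | t ≤ ∑ n ∈ Finset.Icc (1:ℤ) (N:ℤ), Y n ω} ≤
        ENNReal.ofReal (Real.exp ((K:ℝ)*(N:ℝ)*lam^2/2 - lam*t)) := by
      have h2 : ENNReal.ofReal (Real.exp (lam*t)) *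
          P {ω | ENNReal.ofReal (Real.exp (lam * t)) ≤ ENNReal.ofReal (Real.exp (lam * S ω))} ≤
          ENNReal.ofReal (Real.exp ((K:ℝ)*(N:ℝ)*lam^2/2)) := hmark.trans hmain
      have h3 : P {ω | ENNReal.ofReal (Real.exp (lam * t)) ≤
            ENNReal.ofReal (Real.exp (lam * S ω))} ≤
          ENNReal.ofReal (Real.exp ((K:ℝ)*(N:ℝ)*lam^2/2)) / ENNReal.ofReal (Real.exp (lam*t)) :=
        (ENNReal.le_div_iff_mul_le
          (Or.inl (ENNReal.ofReal_pos.mpr (Real.exp_pos _)).ne')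
          (Or.inl ENNReal.ofReal_ne_top)).mpr (by rwa [mul_comm] at h2)
      refine (measure_mono hsub).trans (h3.trans_eq ?_)
      rw [← ENNReal.ofReal_div_of_pos (Real.exp_pos _), ← Real.exp_sub]
    have hts : t^2 = 16 * ((K:ℝ) * ((N:ℝ) + (K:ℝ)) * L) := by
      rw [htdef, mul_pow, Real.sq_sqrt hNK.le]
      norm_num
    have hexp : (K:ℝ)*(N:ℝ)*lam^2/2 - lam*t ≤ -(8*L) := by
      have hlhs : (K:ℝ)*(N:ℝ)*lam^2/2 - lam*t = -(t^2/(2*((K:ℝ)*(N:ℝ)))) := by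
        rw [hlamdef]
        field_simp
        ring
      have hge : 8*L ≤ t^2/(2*((K:ℝ)*(N:ℝ))) := by
        rw [hts, le_div_iff₀ (by positivity)]
        nlinarith [mul_pos (mul_pos hKR hKR) hL]
      rw [hlhs]
      linarith
    have hfin : Real.exp ((K:ℝ)*(N:ℝ)*lam^2/2 - lam*t) ≤ ε^8 := by
      refine (Real.exp_le_exp.mpr hexp).trans_eq ?_
      rw [hLdef, one_div, Real.log_inv]
      rw [show -(8 * -Real.log ε) = ((8:ℕ):ℝ) * Real.log ε by push_cast; ring,
        Real.exp_nat_mul, Real.exp_log hε0]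
    have h7 : ε^7 < 1/2 := by
      have := pow_lt_pow_left₀ hε7 hε0.le (n := 7)
      norm_num at this ⊢
      linarith
    have hlt : ε^8 < ε/2 := by
      calc ε^8 = ε^7 * ε := by ring
        _ < (1/2) * ε := mul_lt_mul_of_pos_right h7 hε0
        _ = ε/2 := by ring
    calc P {ω | t ≤ ∑ n ∈ Finset.Icc (1:ℤ) (N:ℤ), Y n ω}
        ≤ ENNReal.ofReal (Real.exp ((K:ℝ)*(N:ℝ)*lam^2/2 - lam*t)) := hPle
      _ ≤ ENNReal.ofReal (ε^8) := ENNReal.ofReal_le_ofReal hfin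
      _ < ENNReal.ofReal (ε/2) := (ENNReal.ofReal_lt_ofReal_iff (by linarith)).mpr hlt
end

section
/- Let $X_1,\dots,X_K$ be nonnegative random variables (with arbitrary joint distribution) each satisfying $P(X_k \ge x) \le \exp(-a x^2)$ for all $x \ge 0$, where $a = K/(2N)$ for some $N > 0$. Then for any $C > 0$, $P(X_1 + \dots + X_K \ge C) \le \frac{4KN}{C^2} \exp\left(-\frac{C^2}{8KN}\right)$. -/
set_option maxHeartbeats 1000000
open MeasureTheory ProbabilityTheory Real Set Filter
open scoped ENNReal NNReal

lemma aux_tail_lintegral {Ω : Type*} [MeasurableSpace Ω] (P : Measure Ω) [IsProbabilityMeasure P]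
    (f : Ω → ℝ) (hf : Measurable f) (a t : ℝ) (hapos : 0 < a) (ht : 0 < t)
    (htail : ∀ x : ℝ, 0 ≤ x → P {ω | x ≤ f ω} ≤ ENNReal.ofReal (Real.exp (-a * x ^ 2))) :
    ∫⁻ ω, ENNReal.ofReal (max (f ω - t) 0) ∂P ≤
      ENNReal.ofReal (Real.exp (-a * t ^ 2) / (2 * a * t)) := by
  set g : ℝ → ℝ := fun x => ((x + t) / t) * Real.exp (-a * (x + t) ^ 2) with hg
  set F : ℝ → ℝ := fun x => -Real.exp (-a * (x + t) ^ 2) / (2 * a * t) with hF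
  have hder : ∀ x : ℝ, HasDerivAt F (g x) x := by
    intro x
    have h1 : HasDerivAt (fun x : ℝ => -a * (x + t) ^ 2) (-a * (2 * (x + t))) x := by
      have := (((hasDerivAt_id x).add_const t).pow 2).const_mul (-a)
      simpa [mul_comm] using this
    have h2 := ((h1.exp).div_const (2 * a * t)).neg
    have h3 : HasDerivAt F (-(Real.exp (-a * (x + t) ^ 2) * (-a * (2 * (x + t))) / (2 * a * t))) x := by
      rw [hF]; simp only [neg_div]; exact h2
    have heq : g x = -(Real.exp (-a * (x + t) ^ 2) * (-a * (2 * (x + t))) / (2 * a * t)) := by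
      rw [hg]; field_simp
    rw [heq]; exact h3
  have hFtend : Tendsto F atTop (nhds 0) := by
    have h1 : Tendsto (fun x : ℝ => (x + t) ^ 2) atTop atTop :=
      (tendsto_pow_atTop two_ne_zero).comp (tendsto_atTop_add_const_right atTop t tendsto_id)
    have h2 : Tendsto (fun x : ℝ => -a * (x + t) ^ 2) atTop atBot := by
      have h := tendsto_neg_atTop_atBot.comp (h1.const_mul_atTop hapos)
      simp only [neg_mul]
      exact h
    have h3 : Tendsto (fun x : ℝ => Real.exp (-a * (x + t) ^ 2)) atTop (nhds 0) :=
      Real.tendsto_exp_atBot.comp h2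
    have h4 := (h3.neg).div_const (2 * a * t)
    have h0 : (0:ℝ) = -0 / (2 * a * t) := by norm_num
    rw [hF, h0]
    exact h4
  have hgnn : ∀ x ∈ Ioi (0:ℝ), 0 ≤ g x := by
    intro x hx
    have : (0:ℝ) < x := hx
    positivity
  have hint : ∫ x in Ioi (0:ℝ), g x = Real.exp (-a * t ^ 2) / (2 * a * t) := by
    have := integral_Ioi_of_hasDerivAt_of_nonneg' (g := F) (g' := g) (a := 0)
      (fun x _ => hder x) hgnn hFtend
    rw [this]
    simp [hF]
    ring
  have hintg : IntegrableOn g (Ioi (0:ℝ)) :=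
    integrableOn_Ioi_deriv_of_nonneg' (fun x _ => hder x) hgnn hFtend
  have step1 : ∫⁻ ω, ENNReal.ofReal (max (f ω - t) 0) ∂P =
      ∫⁻ x in Ioi (0:ℝ), P {ω | x < max (f ω - t) 0} := by
    apply lintegral_eq_lintegral_meas_lt
    · filter_upwards with ω; exact le_max_right _ _
    · exact ((hf.sub_const t).max measurable_const).aemeasurable
  rw [step1]
  calc ∫⁻ x in Ioi (0:ℝ), P {ω | x < max (f ω - t) 0}
      ≤ ∫⁻ x in Ioi (0:ℝ), ENNReal.ofReal (g x) := by
        apply setLIntegral_mono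
        · exact (ENNReal.measurable_ofReal.comp (by fun_prop))
        · intro x hx
          have hx0 : (0:ℝ) < x := hx
          have hsub : {ω | x < max (f ω - t) 0} ⊆ {ω | x + t ≤ f ω} := by
            intro ω hω
            simp only [Set.mem_setOf_eq] at hω ⊢
            rcases lt_max_iff.1 hω with h | h
            · linarith
            · linarith
          calc P {ω | x < max (f ω - t) 0} ≤ P {ω | x + t ≤ f ω} := measure_mono hsub
            _ ≤ ENNReal.ofReal (Real.exp (-a * (x + t) ^ 2)) := htail _ (by linarith)
            _ ≤ ENNReal.ofReal (g x) := by
                apply ENNReal.ofReal_le_ofReal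
                rw [hg]
                nth_rewrite 1 [← one_mul (Real.exp (-a * (x + t) ^ 2))]
                apply mul_le_mul_of_nonneg_right _ (Real.exp_pos _).le
                rw [le_div_iff₀ ht]
                linarith
    _ = ENNReal.ofReal (∫ x in Ioi (0:ℝ), g x) := by
        rw [ofReal_integral_eq_lintegral_ofReal hintg]
        filter_upwards [ae_restrict_mem measurableSet_Ioi] with x hx
        exact hgnn x hx
    _ = ENNReal.ofReal (Real.exp (-a * t ^ 2) / (2 * a * t)) := by rw [hint]
theorem robust_aggregation_subgaussian_bound
    {Ω : Type*} [MeasurableSpace Ω] (P : Measure Ω) [IsProbabilityMeasure P]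
    (K : ℕ) (hK : 1 ≤ K) (X : ℕ → Ω → ℝ) (a N : ℝ) (hN : 0 < N)
    (ha : a = K / (2 * N))
    (hmeas : ∀ k, Measurable (X k))
    (hnn : ∀ k ω, 0 ≤ X k ω)
    (htail : ∀ k ∈ Finset.range K, ∀ x : ℝ, 0 ≤ x →
      P {ω | x ≤ X k ω} ≤ ENNReal.ofReal (Real.exp (-a * x ^ 2)))
    (C : ℝ) (hC : 0 < C) :
    P {ω | C ≤ ∑ k ∈ Finset.range K, X k ω} ≤
      ENNReal.ofReal ((4 * K * N / C ^ 2) * Real.exp (-(C ^ 2) / (8 * K * N))) := by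
  have hK0 : (0:ℝ) < K := by exact_mod_cast hK
  set t : ℝ := C / (2 * K) with htdef
  have ht : 0 < t := by positivity
  have hapos : 0 < a := by rw [ha]; positivity
  have hKt : (K:ℝ) * t = C / 2 := by rw [htdef]; field_simp
  set f : Ω → ℝ≥0∞ := fun ω => ENNReal.ofReal (∑ k ∈ Finset.range K, max (X k ω - t) 0) with hfdef
  have hfmeas : Measurable f := by
    apply ENNReal.measurable_ofReal.comp
    exact Finset.measurable_sum _ (fun k _ => ((hmeas k).sub_const t).max measurable_const)
  have hsub : {ω | C ≤ ∑ k ∈ Finset.range K, X k ω} ⊆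
      {ω | ENNReal.ofReal (C/2) ≤ f ω} := by
    intro ω hω
    simp only [Set.mem_setOf_eq] at hω ⊢
    apply ENNReal.ofReal_le_ofReal
    have h1 : ∑ k ∈ Finset.range K, X k ω ≤
        (∑ k ∈ Finset.range K, max (X k ω - t) 0) + K * t := by
      calc ∑ k ∈ Finset.range K, X k ω
            ≤ ∑ k ∈ Finset.range K, (max (X k ω - t) 0 + t) := by
            apply Finset.sum_le_sum
            intro k _
            have := le_max_left (X k ω - t) 0
            linarith
          _ = (∑ k ∈ Finset.range K, max (X k ω - t) 0) + K * t := by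
            rw [Finset.sum_add_distrib, Finset.sum_const, Finset.card_range]
            simp [nsmul_eq_mul]
    linarith [hKt]
  set B : ℝ≥0∞ := ENNReal.ofReal (Real.exp (-a * t ^ 2) / (2 * a * t)) with hBdef
  have hlint : ∫⁻ ω, f ω ∂P ≤ (K : ℝ≥0∞) * B := by
    have heq : ∫⁻ ω, f ω ∂P = ∑ k ∈ Finset.range K, ∫⁻ ω, ENNReal.ofReal (max (X k ω - t) 0) ∂P := by
      rw [hfdef]
      rw [← lintegral_finset_sum]
      · apply lintegral_congr
        intro ω
        rw [ENNReal.ofReal_sum_of_nonneg]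
        intro k _
        exact le_max_right _ _
      · intro k _
        exact ENNReal.measurable_ofReal.comp (((hmeas k).sub_const t).max measurable_const)
    rw [heq]
    calc ∑ k ∈ Finset.range K, ∫⁻ ω, ENNReal.ofReal (max (X k ω - t) 0) ∂P
        ≤ ∑ _k ∈ Finset.range K, B := by
          apply Finset.sum_le_sum
          intro k hk
          exact aux_tail_lintegral P (X k) (hmeas k) a t hapos ht (htail k hk)
      _ = (K : ℝ≥0∞) * B := by rw [Finset.sum_const, Finset.card_range]; simp [nsmul_eq_mul]
  have markov := mul_meas_ge_le_lintegral₀ (μ := P) hfmeas.aemeasurable (ENNReal.ofReal (C/2))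
  have hC2pos : (0:ℝ) < C / 2 := by positivity
  have hC2ne : ENNReal.ofReal (C/2) ≠ 0 := by
    simp [ENNReal.ofReal_eq_zero]; linarith
  have hmain : P {ω | C ≤ ∑ k ∈ Finset.range K, X k ω} ≤ (K : ℝ≥0∞) * B / ENNReal.ofReal (C/2) := by
    calc P {ω | C ≤ ∑ k ∈ Finset.range K, X k ω}
        ≤ P {ω | ENNReal.ofReal (C/2) ≤ f ω} := measure_mono hsub
      _ ≤ (K : ℝ≥0∞) * B / ENNReal.ofReal (C/2) := by
          rw [ENNReal.le_div_iff_mul_le (Or.inl hC2ne) (Or.inl ENNReal.ofReal_ne_top)]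
          rw [mul_comm]
          exact le_trans markov hlint
  refine le_trans hmain (le_of_eq ?_)
  rw [hBdef, ← ENNReal.ofReal_natCast K, ← ENNReal.ofReal_mul (by positivity),
    ← ENNReal.ofReal_div_of_pos hC2pos]
  congr 1
  have hexp : -a * t ^ 2 = -(C ^ 2) / (8 * K * N) := by
    rw [ha, htdef]; field_simp; ring
  rw [hexp, ha, htdef]
  field_simp
  ring
end

section
/- Let $X_1,\dots,X_m$ be i.i.d. Rademacher random variables ($\pm 1$ with probability $1/2$ each) and define $Y_n := X_{\lceil n/K \rceil}$ for $n = 1,\dots,N$ where $N = mK$. Let $(\mathcal{F}_n)$ be the filtration generated by $(Y_n)$. Then for every $n$, $\mathbb{E}(Y_n \mid \mathcal{F}_{n-K}) = 0$ a.s., and consequently $\sum_{n=1}^N (Y_n - \mathbb{E}(Y_n \mid \mathcal{F}_{n-K})) = K \sum_{i=1}^m X_i$ a.s. -/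
open MeasureTheory ProbabilityTheory

/-- The filtration generated by a sequence `Y` indexed by `ℤ`, starting from index 1:
`natFiltration Y n = σ(Y 1, …, Y n)`, trivial for `n < 1`. -/
def natFiltration {Ω : Type*} (Y : ℤ → Ω → ℝ) (n : ℤ) : MeasurableSpace Ω :=
  ⨆ i ∈ Set.Icc (1 : ℤ) n, MeasurableSpace.comap (Y i) inferInstance

lemma rademacher_int {Ω : Type*} [MeasurableSpace Ω] (P : Measure Ω) [IsProbabilityMeasure P]
    (f : Ω → ℝ) (hf : Measurable f) (h1 : P {ω | f ω = 1} = 1 / 2)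
    (h2 : P {ω | f ω = -1} = 1 / 2) :
    Integrable f P ∧ ∫ ω, f ω ∂P = 0 := by
  set A : Set Ω := {ω | f ω = 1} with hA
  set B : Set Ω := {ω | f ω = -1} with hB
  have hAm : MeasurableSet A := hf (measurableSet_singleton 1)
  have hBm : MeasurableSet B := hf (measurableSet_singleton (-1))
  have hdisj : Disjoint A B := by
    rw [Set.disjoint_left]
    intro ω hω1 hω2
    simp only [hA, hB, Set.mem_setOf_eq] at hω1 hω2
    norm_num [hω1] at hω2
  have hunion : P (A ∪ B) = 1 := by
    rw [measure_union hdisj hBm, h1, h2]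
    exact ENNReal.add_halves 1
  have hcompl : P (A ∪ B)ᶜ = 0 := by
    rw [measure_compl (hAm.union hBm) (measure_ne_top _ _), hunion, measure_univ, tsub_self]
  set g : Ω → ℝ := A.indicator (fun _ => (1 : ℝ)) + B.indicator (fun _ => (-1 : ℝ)) with hg
  have hae : f =ᵐ[P] g := by
    rw [Filter.EventuallyEq, ae_iff]
    refine measure_mono_null (fun ω hω => ?_) hcompl
    simp only [Set.mem_setOf_eq] at hω
    simp only [Set.mem_compl_iff, Set.mem_union]
    rintro (h1' | h2')
    · apply hω
      have hfω : f ω = 1 := h1'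
      have hωB : ω ∉ B := by simp only [hB, Set.mem_setOf_eq]; norm_num [hfω]
      simp [hg, Set.indicator_of_mem h1', Set.indicator_of_notMem hωB, hfω]
    · apply hω
      have hfω : f ω = -1 := h2'
      have hωA : ω ∉ A := by simp only [hA, Set.mem_setOf_eq]; norm_num [hfω]
      simp [hg, Set.indicator_of_mem h2', Set.indicator_of_notMem hωA, hfω]
  have hgint : Integrable g P :=
    ((integrable_const (1 : ℝ)).indicator hAm).add ((integrable_const (-1 : ℝ)).indicator hBm)
  have hgval : ∫ ω, g ω ∂P = 0 := by
    rw [hg]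
    simp only [Pi.add_apply]
    rw [integral_add ((integrable_const (1 : ℝ)).indicator hAm)
      ((integrable_const (-1 : ℝ)).indicator hBm)]
    rw [integral_indicator_const _ hAm, integral_indicator_const _ hBm, measureReal_def, measureReal_def, h1, h2]
    norm_num [ENNReal.toReal_div]
  exact ⟨hgint.congr hae.symm, by rw [integral_congr_ae hae, hgval]⟩

lemma ceil_block (K : ℤ) (hK : 1 ≤ K) (i n : ℤ) (h1 : (i - 1) * K < n) (h2 : n ≤ i * K) :
    ⌈(n : ℚ) / (K : ℚ)⌉ = i := by
  have hKQ : (0 : ℚ) < (K : ℚ) := by exact_mod_cast lt_of_lt_of_le zero_lt_one hK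
  rw [Int.ceil_eq_iff]
  constructor
  · rw [lt_div_iff₀ hKQ]
    exact_mod_cast h1
  · rw [div_le_iff₀ hKQ]
    exact_mod_cast h2

lemma block_sum (K : ℤ) (hK : 1 ≤ K) (f : ℤ → ℝ) (m : ℕ) :
    ∑ n ∈ Finset.Icc (1 : ℤ) ((m : ℤ) * K), f ⌈(n : ℚ) / (K : ℚ)⌉ =
      (K : ℝ) * ∑ i ∈ Finset.Icc (1 : ℤ) (m : ℤ), f i := by
  induction m with
  | zero => simp
  | succ m ih =>
    have hb1 : Finset.Icc (1 : ℤ) ((m : ℤ) * K) = Finset.Ioc (0 : ℤ) ((m : ℤ) * K) := by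
      ext x; simp [Int.lt_iff_add_one_le]
    have hb2 : Finset.Icc (1 : ℤ) (((m : ℕ) + 1 : ℤ) * K) =
        Finset.Ioc (0 : ℤ) (((m : ℕ) + 1 : ℤ) * K) := by
      ext x; simp [Int.lt_iff_add_one_le]
    have hmK : (0 : ℤ) ≤ (m : ℤ) * K := by positivity
    have hstep : (m : ℤ) * K ≤ ((m : ℕ) + 1 : ℤ) * K := by nlinarith
    have hdisj : Disjoint (Finset.Ioc (0 : ℤ) ((m : ℤ) * K))
        (Finset.Ioc ((m : ℤ) * K) (((m : ℕ) + 1 : ℤ) * K)) := by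
      rw [Finset.disjoint_left]; intro x hx hx'
      simp only [Finset.mem_Ioc] at hx hx'; omega
    have hsplit : (∑ n ∈ Finset.Ioc (0 : ℤ) ((m : ℤ) * K), f ⌈(n : ℚ) / (K : ℚ)⌉) +
        ∑ n ∈ Finset.Ioc ((m : ℤ) * K) (((m : ℕ) + 1 : ℤ) * K), f ⌈(n : ℚ) / (K : ℚ)⌉ =
        ∑ n ∈ Finset.Ioc (0 : ℤ) (((m : ℕ) + 1 : ℤ) * K), f ⌈(n : ℚ) / (K : ℚ)⌉ := by
      rw [← Finset.sum_union hdisj, Finset.Ioc_union_Ioc_eq_Ioc hmK hstep]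
    have hmid : ∑ n ∈ Finset.Ioc ((m : ℤ) * K) (((m : ℕ) + 1 : ℤ) * K),
        f ⌈(n : ℚ) / (K : ℚ)⌉ = (K : ℝ) * f ((m : ℤ) + 1) := by
      rw [Finset.sum_congr rfl (fun n hn => ?_)]
      · rw [Finset.sum_const, Int.card_Ioc]
        have : ((((m : ℕ) + 1 : ℤ) * K - (m : ℤ) * K)).toNat = K.toNat := by
          congr 1; ring
        rw [this, nsmul_eq_mul]
        congr 1
        exact_mod_cast congrArg (Int.cast : ℤ → ℝ) (Int.toNat_of_nonneg (by linarith) : (K.toNat : ℤ) = K)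
      · simp only [Finset.mem_Ioc] at hn
        rw [ceil_block K hK ((m : ℤ) + 1) n (by push_cast at hn ⊢; linarith)
          (by push_cast at hn ⊢; linarith)]
    have hrhs : Finset.Icc (1 : ℤ) ((m : ℕ) + 1 : ℤ) =
        insert ((m : ℤ) + 1) (Finset.Icc (1 : ℤ) (m : ℤ)) := by
      ext x; simp; omega
    push_cast at hb2 hstep hsplit hmid hrhs ⊢
    rw [hb2, ← hsplit, hb1.symm, ih, hmid, hrhs, Finset.sum_insert (by simp)]
    ring

theorem block_rademacher_condexp
    {Ω : Type*} [m0 : MeasurableSpace Ω] (P : Measure Ω) [IsProbabilityMeasure P]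
    (m K N : ℕ) (hK : 1 ≤ K) (hm : 1 ≤ m) (hN : N = m * K)
    (X : ℤ → Ω → ℝ)
    (hmeas : ∀ i, Measurable (X i))
    (hindep : iIndepFun X P)
    (hdist : ∀ i, P {ω | X i ω = 1} = 1 / 2 ∧ P {ω | X i ω = -1} = 1 / 2)
    (Y : ℤ → Ω → ℝ) (hY : ∀ n : ℤ, Y n = X ⌈(n : ℚ) / (K : ℚ)⌉) :
    (∀ n ∈ Finset.Icc (1 : ℤ) N, P[Y n|natFiltration Y (n - K)] =ᵐ[P] 0) ∧
      (∀ᵐ ω ∂P,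
        ∑ n ∈ Finset.Icc (1 : ℤ) N, (Y n ω - (P[Y n|natFiltration Y (n - K)]) ω) =
          (K : ℝ) * ∑ i ∈ Finset.Icc (1 : ℤ) m, X i ω) := by
  have hKZ : (1 : ℤ) ≤ (K : ℤ) := by exact_mod_cast hK
  have hKQ : (0 : ℚ) < (K : ℚ) := by exact_mod_cast lt_of_lt_of_le zero_lt_one hK
  have hYmeas : ∀ i, Measurable (Y i) := fun i => by rw [hY]; exact hmeas _
  have h_le : ∀ i : ℤ, MeasurableSpace.comap (X i) inferInstance ≤ m0 :=
    fun i => (hmeas i).comap_le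
  have hF_le : ∀ n : ℤ, natFiltration Y n ≤ m0 := by
    intro n
    refine iSup₂_le fun i _ => (hYmeas i).comap_le
  -- Part 1
  have part1 : ∀ n ∈ Finset.Icc (1 : ℤ) N, P[Y n|natFiltration Y (n - K)] =ᵐ[P] 0 := by
    intro n hn
    set j : ℤ := ⌈(n : ℚ) / (K : ℚ)⌉ with hj
    -- independence
    have hceil_lt : ∀ i : ℤ, i ≤ n - K → ⌈(i : ℚ) / (K : ℚ)⌉ ≠ j := by
      intro i hi
      have h1 : ((i : ℚ)) / K ≤ ((n : ℚ) - K) / K := by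
        gcongr
        exact_mod_cast by linarith
      have h2 : ((n : ℚ) - K) / K = (n : ℚ) / K - 1 := by
        field_simp
      have h3 : ⌈(i : ℚ) / (K : ℚ)⌉ ≤ j - 1 := by
        calc ⌈(i : ℚ) / (K : ℚ)⌉ ≤ ⌈((n : ℚ) - K) / K⌉ := Int.ceil_le_ceil h1
          _ = j - 1 := by rw [h2, Int.ceil_sub_one]
      omega
    have hindep2 : Indep (MeasurableSpace.comap (X j) inferInstance)
        (natFiltration Y (n - K)) P := by
      have h := indep_biSup_compl h_le hindep {j}
      have hleft : (⨆ i ∈ ({j} : Set ℤ), MeasurableSpace.comap (X i) inferInstance) =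
          MeasurableSpace.comap (X j) inferInstance := by simp
      rw [hleft] at h
      refine indep_of_indep_of_le_right h ?_
      refine iSup₂_le fun i hi => ?_
      rw [hY i]
      have hmem : (⌈(i : ℚ) / (K : ℚ)⌉ : ℤ) ∈ ({j} : Set ℤ)ᶜ := by
        simp only [Set.mem_compl_iff, Set.mem_singleton_iff]
        exact hceil_lt i (Set.mem_Icc.mp hi).2
      exact le_iSup₂ (f := fun i (_ : i ∈ ({j} : Set ℤ)ᶜ) =>
        MeasurableSpace.comap (X i) inferInstance) _ hmem
    have hrad := rademacher_int P (X j) (hmeas j) (hdist j).1 (hdist j).2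
    have hsm : StronglyMeasurable[MeasurableSpace.comap (X j) inferInstance] (X j) :=
      Measurable.stronglyMeasurable (Measurable.of_comap_le le_rfl)
    have hce := condExp_indep_eq (h_le j) (hF_le (n - K)) hsm hindep2 (μ := P) (f := X j)
    have : P[Y n|natFiltration Y (n - K)] =ᵐ[P] fun _ => ∫ ω, X j ω ∂P := by
      rw [hY n]; exact hce
    refine this.trans ?_
    rw [hrad.2]
    rfl
  refine ⟨part1, ?_⟩
  -- Part 2
  have hall : ∀ᵐ ω ∂P, ∀ n ∈ Finset.Icc (1 : ℤ) N,
      (P[Y n|natFiltration Y (n - K)]) ω = 0 := by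
    rw [Finset.eventually_all]
    intro n hn
    filter_upwards [part1 n hn] with ω h using h
  filter_upwards [hall] with ω hω
  have : ∑ n ∈ Finset.Icc (1 : ℤ) N, (Y n ω - (P[Y n|natFiltration Y (n - K)]) ω) =
      ∑ n ∈ Finset.Icc (1 : ℤ) N, X ⌈(n : ℚ) / (K : ℚ)⌉ ω := by
    refine Finset.sum_congr rfl fun n hn => ?_
    rw [hω n hn, sub_zero, hY n]
  rw [this]
  have hbs := block_sum (K : ℤ) hKZ (fun i => X i ω) m
  have hNK : (N : ℤ) = (m : ℤ) * (K : ℤ) := by rw [hN]; push_cast; ring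
  rw [hNK]
  exact hbs
end
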